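/- arXiv:1309.3692 — 4 statements merged into one kernel-verified Lean document; each statement's English description precedes it below -/
import Mathlib

section
/- The expected one-step reward is monotone in each belief: for any finite set S of channels, any index i ∈ S, any access cap m ∈ ℕ, any ω_{-i} : S∖{i} → [0,1], and any x, y ∈ [0,1] with x ≥ y, it holds that R_m((x, ω_{-i}); S) ≥ R_m((y, ω_{-i}); S), where (x, ω_{-i}) denotes the belief vector on S assigning x to channel i and ω_{-i} elsewhere. -/
open Finset

noncomputable section

/-- Belief update map `τ(ω) = ω·p11 + (1-ω)·p01`. -/
def tau (p01 p11 ω : ℝ) : ℝ := ω * p11 + (1 - ω) * p01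

/-- Expected one-step reward `R_m(ω; S)` with access cap `m`:
the expectation of `min(#available, m)` when each channel `i ∈ S` is
independently available with probability `ω i`. -/
def expReward {ι : Type*} [DecidableEq ι] (m : ℕ) (S : Finset ι) (ω : ι → ℝ) : ℝ :=
  ∑ A ∈ S.powerset,
    (∏ i ∈ A, ω i) * (∏ i ∈ S \ A, (1 - ω i)) * ((min A.card m : ℕ) : ℝ)

/-- The set of reward increments `R_m(1,x) − R_m(0,x)` over `x ∈ [lo,hi]^{k'}`
(on `k' + 1` channels). -/
def RdiffSet (lo hi : ℝ) (m k' : ℕ) : Set ℝ :=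
  { r : ℝ | ∃ x : Fin k' → ℝ, (∀ i, x i ∈ Set.Icc lo hi) ∧
      r = expReward m Finset.univ (Fin.cons 1 x) -
          expReward m Finset.univ (Fin.cons 0 x) }

/-- `ℛ̄`: maximal reward increment. -/
def Rbar (lo hi : ℝ) (m k' : ℕ) : ℝ := sSup (RdiffSet lo hi m k')

/-- `ℛ̲`: minimal reward increment. -/
def Rlow (lo hi : ℝ) (m k' : ℕ) : ℝ := sInf (RdiffSet lo hi m k')

/-- The first `k` channels out of `N` (the myopically sensed channels for a
descending-ordered belief vector). -/
def senseSet (N k : ℕ) : Finset (Fin N) := Finset.univ.filter (fun i => (i : ℕ) < k)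

/-- Positively correlated case successor belief vector: `c` copies of `p11`,
then `τ(ω_{k+1}), …, τ(ω_N)`, then `k - c` copies of `p01`. -/
def nextPos (p01 p11 : ℝ) {N : ℕ} (k : ℕ) (ω : Fin N → ℝ) (c : ℕ) : Fin N → ℝ :=
  fun i =>
    if h1 : (i : ℕ) < c then p11
    else if h2 : (i : ℕ) < c + (N - k) then
      tau p01 p11 (ω ⟨k + ((i : ℕ) - c), by have := i.isLt; omega⟩)
    else p01

/-- Negatively correlated case successor belief vector: `k - c` copies of `p01`,
then `τ(ω_N), τ(ω_{N-1}), …, τ(ω_{k+1})` (reversed), then `c` copies of `p11`. -/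
def nextNeg (p01 p11 : ℝ) {N : ℕ} (k : ℕ) (ω : Fin N → ℝ) (c : ℕ) : Fin N → ℝ :=
  fun i =>
    if h1 : (i : ℕ) < k - c then p01
    else if h2 : (i : ℕ) < (k - c) + (N - k) then
      tau p01 p11 (ω ⟨N - 1 - ((i : ℕ) - (k - c)), by have := i.isLt; omega⟩)
    else p11

/-- Myopic value functions for the positively correlated case, indexed by the
number `s` of remaining steps (so `W_t = Wpos (T - t)`). -/
def Wpos (p01 p11 β : ℝ) (N k m : ℕ) : ℕ → (Fin N → ℝ) → ℝ
  | 0, ω => expReward m (senseSet N k) ω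
  | s + 1, ω =>
    expReward m (senseSet N k) ω +
      β * ∑ A ∈ (senseSet N k).powerset,
        (∏ i ∈ A, ω i) * (∏ i ∈ senseSet N k \ A, (1 - ω i)) *
          Wpos p01 p11 β N k m s (nextPos p01 p11 k ω A.card)

/-- Myopic value functions for the negatively correlated case, indexed by the
number `s` of remaining steps (so `W_t = Wneg (T - t)`). -/
def Wneg (p01 p11 β : ℝ) (N k m : ℕ) : ℕ → (Fin N → ℝ) → ℝ
  | 0, ω => expReward m (senseSet N k) ω
  | s + 1, ω =>
    expReward m (senseSet N k) ω +
      β * ∑ A ∈ (senseSet N k).powerset,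
        (∏ i ∈ A, ω i) * (∏ i ∈ senseSet N k \ A, (1 - ω i)) *
          Wneg p01 p11 β N k m s (nextNeg p01 p11 k ω A.card)

/-- Optimal value functions, indexed by the number `s` of remaining steps
(so `V_t = Vopt (T - t)`). -/
def Vopt (p01 p11 β : ℝ) (N k m : ℕ) : ℕ → (Fin N → ℝ) → ℝ
  | 0, ω => sSup { r : ℝ | ∃ π : Finset (Fin N), π.card = k ∧ r = expReward m π ω }
  | s + 1, ω =>
    sSup { r : ℝ | ∃ π : Finset (Fin N), π.card = k ∧
      r = expReward m π ω +
        β * ∑ B ∈ π.powerset,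
          (∏ i ∈ B, ω i) * (∏ i ∈ π \ B, (1 - ω i)) *
            Vopt p01 p11 β N k m s
              (fun j => if j ∈ B then p11 else if j ∈ π then p01 else tau p01 p11 (ω j)) }

/-- The cyclic right shift `(ω_N, ω_1, …, ω_{N-1})`. -/
def cycR {N : ℕ} (ω : Fin N → ℝ) : Fin N → ℝ :=
  fun i =>
    if h : (i : ℕ) = 0 then ω ⟨N - 1, by have := i.isLt; omega⟩
    else ω ⟨(i : ℕ) - 1, by have := i.isLt; omega⟩

/-- The cyclic left shift `(ω_2, ω_3, …, ω_N, ω_1)`. -/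
def cycL {N : ℕ} (ω : Fin N → ℝ) : Fin N → ℝ :=
  fun i =>
    if h : (i : ℕ) + 1 < N then ω ⟨(i : ℕ) + 1, h⟩
    else ω ⟨0, by have := i.isLt; omega⟩

/-- The vector `(ω_1, …, ω_{j-1}, x, y, ω_{j+2}, …, ω_N)` (0-indexed: `x` at
position `j`, `y` at position `j+1`). -/
def swapAt {N : ℕ} (ω : Fin N → ℝ) (j : ℕ) (x y : ℝ) : Fin N → ℝ :=
  fun i => if (i : ℕ) = j then x else if (i : ℕ) = j + 1 then y else ω i

end

lemma expReward_insert {ι : Type*} [DecidableEq ι] (m : ℕ) (s : Finset ι) (i : ι)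
    (hi : i ∉ s) (ω : ι → ℝ) :
    expReward m (insert i s) ω =
      (1 - ω i) * ∑ A ∈ s.powerset,
          (∏ j ∈ A, ω j) * (∏ j ∈ s \ A, (1 - ω j)) * ((min A.card m : ℕ) : ℝ)
      + ω i * ∑ A ∈ s.powerset,
          (∏ j ∈ A, ω j) * (∏ j ∈ s \ A, (1 - ω j)) * ((min (A.card + 1) m : ℕ) : ℝ) := by
  unfold expReward
  rw [Finset.sum_powerset_insert hi, Finset.mul_sum, Finset.mul_sum]
  congr 1
  · apply Finset.sum_congr rfl
    intro A hA
    rw [Finset.mem_powerset] at hA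
    have hiA : i ∉ A := fun h => hi (hA h)
    have h1 : insert i s \ A = insert i (s \ A) := by
      ext j
      simp only [Finset.mem_sdiff, Finset.mem_insert]
      constructor
      · rintro ⟨h | h, h2⟩
        · exact Or.inl h
        · exact Or.inr ⟨h, h2⟩
      · rintro (h | ⟨h, h2⟩)
        · exact ⟨Or.inl h, h ▸ hiA⟩
        · exact ⟨Or.inr h, h2⟩
    rw [h1, Finset.prod_insert (by simp [hi])]
    ring
  · apply Finset.sum_congr rfl
    intro A hA
    rw [Finset.mem_powerset] at hA
    have hiA : i ∉ A := fun h => hi (hA h)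
    have h1 : insert i s \ insert i A = s \ A := by
      ext j
      simp only [Finset.mem_sdiff, Finset.mem_insert, not_or]
      constructor
      · rintro ⟨h | h, h2, h3⟩
        · exact absurd h h2
        · exact ⟨h, h3⟩
      · rintro ⟨h, h2⟩
        exact ⟨Or.inr h, fun he => hi (he ▸ h), h2⟩
    rw [h1, Finset.prod_insert hiA, Finset.card_insert_of_notMem hiA]
    ring

/-- the expected one-step reward is monotone in each belief
coordinate. -/
theorem expReward_monotone {ι : Type*} [DecidableEq ι] (S : Finset ι) (i : ι)
    (hi : i ∈ S) (m : ℕ) (ω : ι → ℝ) (hω : ∀ j ∈ S.erase i, ω j ∈ Set.Icc (0 : ℝ) 1)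
    (x y : ℝ) (hx : x ∈ Set.Icc (0 : ℝ) 1) (hy : y ∈ Set.Icc (0 : ℝ) 1) (hxy : x ≥ y) :
    expReward m S (Function.update ω i x) ≥ expReward m S (Function.update ω i y) := by
  set s := S.erase i with hs
  have hins : i ∉ s := Finset.notMem_erase i S
  have hS : S = insert i s := (Finset.insert_erase hi).symm
  have hconst : ∀ (t : ℝ) (c : Finset ι → ℕ),
      (∑ A ∈ s.powerset, (∏ j ∈ A, Function.update ω i t j) *
        (∏ j ∈ s \ A, (1 - Function.update ω i t j)) * ((c A : ℕ) : ℝ)) =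
      ∑ A ∈ s.powerset, (∏ j ∈ A, ω j) * (∏ j ∈ s \ A, (1 - ω j)) * ((c A : ℕ) : ℝ) := by
    intro t c
    apply Finset.sum_congr rfl
    intro A hA
    rw [Finset.mem_powerset] at hA
    congr 1
    congr 1
    · refine Finset.prod_congr rfl fun j hj => ?_
      have hji : j ≠ i := by rintro rfl; exact hins (hA hj)
      exact Function.update_of_ne hji _ _
    · refine Finset.prod_congr rfl fun j hj => ?_
      have hji : j ≠ i := by rintro rfl; exact hins (Finset.mem_sdiff.1 hj).1
      rw [Function.update_of_ne hji _ _]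
  set E0 := ∑ A ∈ s.powerset, (∏ j ∈ A, ω j) * (∏ j ∈ s \ A, (1 - ω j)) *
      ((min A.card m : ℕ) : ℝ) with hE0
  set E1 := ∑ A ∈ s.powerset, (∏ j ∈ A, ω j) * (∏ j ∈ s \ A, (1 - ω j)) *
      ((min (A.card + 1) m : ℕ) : ℝ) with hE1
  have hle : E0 ≤ E1 := by
    apply Finset.sum_le_sum
    intro A hA
    rw [Finset.mem_powerset] at hA
    have hw : 0 ≤ (∏ j ∈ A, ω j) * (∏ j ∈ s \ A, (1 - ω j)) := by
      apply mul_nonneg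
      · exact Finset.prod_nonneg fun j hj => (hω j (hA hj)).1
      · exact Finset.prod_nonneg fun j hj => by
          have := (hω j (Finset.mem_sdiff.1 hj).1).2; linarith
    apply mul_le_mul_of_nonneg_left _ hw
    exact_mod_cast min_le_min (Nat.le_succ _) le_rfl
  have hxi : Function.update ω i x i = x := Function.update_self i x ω
  have hyi : Function.update ω i y i = y := Function.update_self i y ω
  rw [hS, expReward_insert m s i hins, expReward_insert m s i hins,
    hconst x, hconst y, hconst x, hconst y, hxi, hyi, ← hE0, ← hE1]
  nlinarith [mul_nonneg (sub_nonneg.2 hxy) (sub_nonneg.2 hle)]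
end

section
/- For the model with k sensed channels and access cap m = 1, assuming p01, p11 ∈ [0,1] with p11 ≥ p01, the extremal reward increments are ℛ̄ = (1 − p01)^{k−1} and ℛ̲ = (1 − p11)^{k−1}. -/
open Finset

lemma expReward_one {ι : Type*} [DecidableEq ι] (S : Finset ι) (ω : ι → ℝ) :
    expReward 1 S ω = 1 - ∏ i ∈ S, (1 - ω i) := by
  unfold expReward
  have h1 : ∑ A ∈ S.powerset, (∏ i ∈ A, ω i) * (∏ i ∈ S \ A, (1 - ω i)) = 1 := by
    rw [← Finset.prod_add]
    simp
  calc ∑ A ∈ S.powerset, (∏ i ∈ A, ω i) * (∏ i ∈ S \ A, (1 - ω i)) * ((min A.card 1 : ℕ) : ℝ)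
      = ∑ A ∈ S.powerset, ((∏ i ∈ A, ω i) * (∏ i ∈ S \ A, (1 - ω i)) -
          (if A = ∅ then (∏ i ∈ A, ω i) * (∏ i ∈ S \ A, (1 - ω i)) else 0)) := by
        refine Finset.sum_congr rfl fun A _ => ?_
        by_cases hA : A = ∅
        · subst hA; simp
        · have hc : A.card ≠ 0 := by simpa [Finset.card_eq_zero] using hA
          have hm : min A.card 1 = 1 := by omega
          simp [hA, hm]
    _ = 1 - ∏ i ∈ S, (1 - ω i) := by
        rw [Finset.sum_sub_distrib, h1, Finset.sum_ite_eq' S.powerset ∅]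
        simp

lemma rdiff_eq (k' : ℕ) (x : Fin k' → ℝ) :
    expReward 1 Finset.univ (Fin.cons 1 x) - expReward 1 Finset.univ (Fin.cons 0 x) =
      ∏ i, (1 - x i) := by
  rw [expReward_one, expReward_one, Fin.prod_univ_succ, Fin.prod_univ_succ]
  simp

lemma RdiffSet_one (lo hi : ℝ) (k' : ℕ) :
    RdiffSet lo hi 1 k' = { r : ℝ | ∃ x : Fin k' → ℝ,
      (∀ i, x i ∈ Set.Icc lo hi) ∧ r = ∏ i, (1 - x i) } := by
  ext r
  constructor
  · rintro ⟨x, hx, rfl⟩; exact ⟨x, hx, rdiff_eq k' x⟩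
  · rintro ⟨x, hx, rfl⟩; exact ⟨x, hx, (rdiff_eq k' x).symm⟩

/-- for the `(k, 1)` model with positively correlated channels,
`ℛ̄ = (1 - p01)^(k-1)` and `ℛ̲ = (1 - p11)^(k-1)`. -/
theorem Rbar_Rlow_k1 (p01 p11 : ℝ) (h0 : p01 ∈ Set.Icc (0 : ℝ) 1)
    (h1 : p11 ∈ Set.Icc (0 : ℝ) 1) (hp : p01 ≤ p11) (k : ℕ) (hk : 1 ≤ k) :
    Rbar p01 p11 1 (k - 1) = (1 - p01) ^ (k - 1) ∧
      Rlow p01 p11 1 (k - 1) = (1 - p11) ^ (k - 1) := by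
  obtain ⟨h00, h01⟩ := h0
  obtain ⟨h10, h11⟩ := h1
  set k' := k - 1
  constructor
  · have : IsGreatest (RdiffSet p01 p11 1 k') ((1 - p01) ^ k') := by
      rw [RdiffSet_one]
      constructor
      · exact ⟨fun _ => p01, fun i => ⟨le_refl _, hp⟩, by simp⟩
      · rintro r ⟨x, hx, rfl⟩
        calc ∏ i, (1 - x i) ≤ ∏ _i : Fin k', (1 - p01) := by
              apply Finset.prod_le_prod
              · intro i _
                have := (hx i).2
                linarith
              · intro i _
                have := (hx i).1
                linarith
          _ = (1 - p01) ^ k' := by simp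
    exact this.csSup_eq
  · have : IsLeast (RdiffSet p01 p11 1 k') ((1 - p11) ^ k') := by
      rw [RdiffSet_one]
      constructor
      · exact ⟨fun _ => p11, fun i => ⟨hp, le_refl _⟩, by simp⟩
      · rintro r ⟨x, hx, rfl⟩
        calc (1 - p11) ^ k' = ∏ _i : Fin k', (1 - p11) := by simp
          _ ≤ ∏ i, (1 - x i) := by
              apply Finset.prod_le_prod
              · intro i _; linarith
              · intro i _
                have := (hx i).2
                linarith
    exact this.csInf_eq
end

section
/- Affinity of the myopic value functions: for every t ∈ {1,…,T}, every coordinate j ∈ {1,…,N}, every ω ∈ [0,1]^N, and every x, y ∈ [0,1], it holds that W_t(ω with j-th coordinate x) − W_t(ω with j-th coordinate y) = (x − y) · [W_t(ω with j-th coordinate 1) − W_t(ω with j-th coordinate 0)]; i.e., W_t is an affine function of each coordinate of the belief vector. -/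
open Finset

/-- Auxiliary: a function `ℝ → ℝ` is affine. -/
def IsAff (f : ℝ → ℝ) : Prop := ∀ x, f x = f 0 + x * (f 1 - f 0)

theorem isAff_of {f : ℝ → ℝ} (a b : ℝ) (h : ∀ x, f x = a * x + b) : IsAff f := by
  intro x; rw [h x, h 0, h 1]; ring

theorem isAff_ext {f g : ℝ → ℝ} (h : ∀ x, f x = g x) (hg : IsAff g) : IsAff f := by
  intro x; rw [h x, h 0, h 1]; exact hg x

theorem isAff_add {f g : ℝ → ℝ} (hf : IsAff f) (hg : IsAff g) :
    IsAff (fun x => f x + g x) := by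
  intro x; simp only; rw [hf x, hg x]; ring

theorem isAff_const_mul (c : ℝ) {f : ℝ → ℝ} (hf : IsAff f) :
    IsAff (fun x => c * f x) := by
  intro x; simp only; rw [hf x]; ring

theorem isAff_comp_affine {f : ℝ → ℝ} (hf : IsAff f) (a b : ℝ) :
    IsAff (fun x => f (a * x + b)) := by
  intro x; simp only; rw [hf (a * x + b), hf (a * 0 + b), hf (a * 1 + b)]; ring

theorem isAff_sum {ι : Type*} (s : Finset ι) (f : ι → ℝ → ℝ)
    (h : ∀ i ∈ s, IsAff (f i)) : IsAff (fun x => ∑ i ∈ s, f i x) := by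
  apply isAff_of (∑ i ∈ s, (f i 1 - f i 0)) (∑ i ∈ s, f i 0)
  intro x
  rw [Finset.sum_congr rfl (fun i hi => h i hi x), Finset.sum_add_distrib,
    ← Finset.mul_sum]
  ring

theorem prod_update_of_not_mem' {N : ℕ} (ω : Fin N → ℝ) (j : Fin N)
    (A : Finset (Fin N)) (hj : j ∉ A) (x : ℝ) :
    ∏ i ∈ A, Function.update ω j x i = ∏ i ∈ A, ω i :=
  Finset.prod_congr rfl fun i hi =>
    Function.update_of_ne (fun h => hj (by rwa [← h])) _ _

theorem prod_one_sub_update_of_not_mem' {N : ℕ} (ω : Fin N → ℝ) (j : Fin N)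
    (A : Finset (Fin N)) (hj : j ∉ A) (x : ℝ) :
    ∏ i ∈ A, (1 - Function.update ω j x i) = ∏ i ∈ A, (1 - ω i) :=
  Finset.prod_congr rfl fun i hi => by
    rw [Function.update_of_ne (fun h => hj (by rwa [← h]))]

theorem isAff_coeff {N : ℕ} (ω : Fin N → ℝ) (j : Fin N) (S A : Finset (Fin N))
    (r : ℝ) :
    IsAff (fun x => (∏ i ∈ A, Function.update ω j x i) *
      (∏ i ∈ S \ A, (1 - Function.update ω j x i)) * r) := by
  by_cases hA : j ∈ A
  · have hB : j ∉ S \ A := fun h => (Finset.mem_sdiff.mp h).2 hA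
    apply isAff_of ((∏ i ∈ A.erase j, ω i) * (∏ i ∈ S \ A, (1 - ω i)) * r) 0
    intro x
    rw [← Finset.mul_prod_erase A _ hA, Function.update_self,
      prod_update_of_not_mem' ω j _ (Finset.notMem_erase j A) x,
      prod_one_sub_update_of_not_mem' ω j _ hB x]
    ring
  · by_cases hB : j ∈ S \ A
    · apply isAff_of (-((∏ i ∈ A, ω i) * (∏ i ∈ (S \ A).erase j, (1 - ω i)) * r))
        ((∏ i ∈ A, ω i) * (∏ i ∈ (S \ A).erase j, (1 - ω i)) * r)
      intro x
      rw [prod_update_of_not_mem' ω j _ hA x, ← Finset.mul_prod_erase _ _ hB,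
        Function.update_self,
        prod_one_sub_update_of_not_mem' ω j _ (Finset.notMem_erase j _) x]
      ring
    · apply isAff_of 0 ((∏ i ∈ A, ω i) * (∏ i ∈ S \ A, (1 - ω i)) * r)
      intro x
      rw [prod_update_of_not_mem' ω j _ hA x,
        prod_one_sub_update_of_not_mem' ω j _ hB x]
      ring

theorem card_senseSet_le (N k : ℕ) : (senseSet N k).card ≤ k := by
  have h : (senseSet N k).card ≤ (Finset.range k).card := by
    apply Finset.card_le_card_of_injOn (fun i : Fin N => (i : ℕ))
    · intro a ha
      simp only [senseSet, Finset.mem_filter] at ha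
      exact Finset.mem_range.mpr (by simpa [List.mem_filter] using ha)
    · intro a _ b _ h
      exact Fin.ext h
  simpa using h

theorem nextPos_update_lt {p01 p11 : ℝ} {N k : ℕ} (ω : Fin N → ℝ) (j : Fin N)
    (hjk : (j : ℕ) < k) (c : ℕ) (x : ℝ) :
    nextPos p01 p11 k (Function.update ω j x) c = nextPos p01 p11 k ω c := by
  funext i
  unfold nextPos
  split_ifs with h1 h2
  · rfl
  · congr 1
    apply Function.update_of_ne
    intro h
    have : ((⟨k + ((i : ℕ) - c), by have := i.isLt; omega⟩ : Fin N) : ℕ) = (j : ℕ) :=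
      congrArg Fin.val h
    simp only at this
    omega
  · rfl

theorem nextPos_update_ge {p01 p11 : ℝ} {N k : ℕ} (ω : Fin N → ℝ) (j : Fin N)
    (hjk : k ≤ (j : ℕ)) (c : ℕ) (hc : c ≤ k) (x : ℝ) :
    nextPos p01 p11 k (Function.update ω j x) c =
      Function.update (nextPos p01 p11 k ω c)
        ⟨c + ((j : ℕ) - k), by have := j.isLt; omega⟩ (tau p01 p11 x) := by
  have hjN : (j : ℕ) < N := j.isLt
  funext i
  by_cases hi : (i : ℕ) = c + ((j : ℕ) - k)
  · have hieq : i = (⟨c + ((j : ℕ) - k), by omega⟩ : Fin N) := Fin.ext hi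
    rw [hieq, Function.update_self]
    unfold nextPos
    rw [dif_neg (by omega), dif_pos (by omega)]
    have : (⟨k + ((⟨c + ((j : ℕ) - k), by omega⟩ : Fin N) : ℕ) - c, by omega⟩ : Fin N)
        = j := Fin.ext (by simp; omega)
    congr 1
    rw [show (⟨k + (((⟨c + ((j : ℕ) - k), by omega⟩ : Fin N) : ℕ) - c), by simp; omega⟩
        : Fin N) = j from Fin.ext (by simp; omega)]
    rw [Function.update_self]
  · rw [Function.update_of_ne (fun h => hi (congrArg Fin.val h))]
    unfold nextPos
    split_ifs with h1 h2
    · rfl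
    · congr 1
      apply Function.update_of_ne
      intro h
      have : k + ((i : ℕ) - c) = (j : ℕ) := congrArg Fin.val h
      omega
    · rfl

theorem Wpos_isAff (p01 p11 β : ℝ) (N k m : ℕ) :
    ∀ (s : ℕ) (j : Fin N) (ω : Fin N → ℝ),
      IsAff (fun x => Wpos p01 p11 β N k m s (Function.update ω j x)) := by
  intro s
  induction s with
  | zero =>
    intro j ω
    show IsAff (fun x => expReward m (senseSet N k) (Function.update ω j x))
    unfold expReward
    exact isAff_sum _ _ (fun A _ => isAff_coeff ω j _ A _)
  | succ s ih =>
    intro j ω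
    show IsAff (fun x =>
      expReward m (senseSet N k) (Function.update ω j x) +
        β * ∑ A ∈ (senseSet N k).powerset,
          (∏ i ∈ A, Function.update ω j x i) *
            (∏ i ∈ senseSet N k \ A, (1 - Function.update ω j x i)) *
            Wpos p01 p11 β N k m s
              (nextPos p01 p11 k (Function.update ω j x) A.card))
    apply isAff_add
    · unfold expReward
      exact isAff_sum _ _ (fun A _ => isAff_coeff ω j _ A _)
    · apply isAff_const_mul
      apply isAff_sum
      intro A hA
      by_cases hjk : (j : ℕ) < k
      · apply isAff_ext (g := fun x =>
          (∏ i ∈ A, Function.update ω j x i) *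
            (∏ i ∈ senseSet N k \ A, (1 - Function.update ω j x i)) *
            Wpos p01 p11 β N k m s (nextPos p01 p11 k ω A.card))
        · intro x; rw [nextPos_update_lt ω j hjk A.card x]
        · exact isAff_coeff ω j _ A _
      · have hsub := Finset.mem_powerset.mp hA
        have hjA : j ∉ A := fun h => by
          have := (Finset.mem_filter.mp (hsub h)).2; omega
        have hjB : j ∉ senseSet N k \ A := fun h => by
          have := (Finset.mem_filter.mp (Finset.mem_sdiff.mp h).1).2; omega
        have hc : A.card ≤ k :=
          le_trans (Finset.card_le_card hsub) (card_senseSet_le N k)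
        have hjk' : k ≤ (j : ℕ) := le_of_not_gt hjk
        have hIH := ih ⟨A.card + ((j : ℕ) - k), by have := j.isLt; omega⟩
          (nextPos p01 p11 k ω A.card)
        apply isAff_ext (g := fun x =>
          ((∏ i ∈ A, ω i) * (∏ i ∈ senseSet N k \ A, (1 - ω i))) *
            Wpos p01 p11 β N k m s
              (Function.update (nextPos p01 p11 k ω A.card)
                ⟨A.card + ((j : ℕ) - k), by have := j.isLt; omega⟩
                ((p11 - p01) * x + p01)))
        · intro x
          rw [prod_update_of_not_mem' ω j _ hjA x,
            prod_one_sub_update_of_not_mem' ω j _ hjB x,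
            nextPos_update_ge ω j hjk' A.card hc x]
          have : tau p01 p11 x = (p11 - p01) * x + p01 := by unfold tau; ring
          rw [this, mul_assoc]
        · exact isAff_const_mul _ (isAff_comp_affine hIH (p11 - p01) p01)

/-- the myopic value functions are affine in each belief
coordinate. -/
theorem Wpos_affine (p01 p11 β : ℝ) (h0 : p01 ∈ Set.Icc (0 : ℝ) 1)
    (h1 : p11 ∈ Set.Icc (0 : ℝ) 1) (hp : p01 ≤ p11)
    (N k m T : ℕ) (hm : 1 ≤ m) (hmk : m ≤ k) (hkN : k ≤ N) (hT : 1 ≤ T)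
    (hβ0 : 0 ≤ β) (hβ1 : β ≤ 1) :
    ∀ t, 1 ≤ t → t ≤ T → ∀ j : Fin N, ∀ ω : Fin N → ℝ,
      (∀ i, ω i ∈ Set.Icc (0 : ℝ) 1) →
      ∀ x y : ℝ, x ∈ Set.Icc (0 : ℝ) 1 → y ∈ Set.Icc (0 : ℝ) 1 →
      Wpos p01 p11 β N k m (T - t) (Function.update ω j x) -
          Wpos p01 p11 β N k m (T - t) (Function.update ω j y) =
        (x - y) *
          (Wpos p01 p11 β N k m (T - t) (Function.update ω j 1) -
            Wpos p01 p11 β N k m (T - t) (Function.update ω j 0)) := by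
  intro t _ _ j ω _ x y _ _
  have H := Wpos_isAff p01 p11 β N k m (T - t) j ω
  have hx := H x
  have hy := H y
  have h1 := H 1
  simp only at hx hy h1
  linear_combination hx - hy + (x - y) * h1
end

section
/- Key inequality L1 for positively correlated channels: assume p11 ≥ p01, 0 ≤ β ≤ 1, and β·ℛ̄ ≤ ℛ̲. Then for every t ∈ {1,…,T} and every belief vector ω ∈ [0,1]^N with p11 ≥ ω₁ ≥ ω₂ ≥ … ≥ ω_N ≥ p01, it holds that ℛ̄ + W_t(ω_N, ω₁, …, ω_{N−1}) ≥ W_t(ω₁, …, ω_N). -/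
open Finset

section AUX


noncomputable def bf : List ℝ → (ℕ → ℝ) → ℝ
  | [], f => f 0
  | p :: L, f => p * bf L (fun e => f (e + 1)) + (1 - p) * bf L f

@[simp] lemma bf_nil (f : ℕ → ℝ) : bf [] f = f 0 := rfl
@[simp] lemma bf_cons (p : ℝ) (L : List ℝ) (f : ℕ → ℝ) :
    bf (p :: L) f = p * bf L (fun e => f (e + 1)) + (1 - p) * bf L f := rfl

lemma bf_congr : ∀ (L : List ℝ) (f g : ℕ → ℝ), (∀ e ≤ L.length, f e = g e) →
    bf L f = bf L g
  | [], f, g, h => h 0 (by simp)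
  | p :: L, f, g, h => by
    simp only [bf_cons]
    rw [bf_congr L _ _ (fun e he => h (e+1) (by simpa using he)),
        bf_congr L f g (fun e he => h e (by simp; omega))]

lemma bf_mono : ∀ (L : List ℝ) (f g : ℕ → ℝ), (∀ x ∈ L, 0 ≤ x ∧ x ≤ 1) →
    (∀ e ≤ L.length, f e ≤ g e) → bf L f ≤ bf L g
  | [], f, g, _, h => h 0 (by simp)
  | p :: L, f, g, hx, h => by
    simp only [bf_cons]
    have h1 := bf_mono L (fun e => f (e+1)) (fun e => g (e+1))
      (fun x hx' => hx x (by simp [hx'])) (fun e he => h (e+1) (by simpa using he))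
    have h2 := bf_mono L f g (fun x hx' => hx x (by simp [hx'])) (fun e he => h e (by simp; omega))
    have hp := hx p (by simp)
    nlinarith [h1, h2, hp.1, hp.2]

lemma bf_add : ∀ (L : List ℝ) (f g : ℕ → ℝ),
    bf L (fun e => f e + g e) = bf L f + bf L g
  | [], f, g => rfl
  | p :: L, f, g => by
    simp only [bf_cons, bf_add L]
    ring

lemma bf_smul : ∀ (L : List ℝ) (c : ℝ) (f : ℕ → ℝ),
    bf L (fun e => c * f e) = c * bf L f
  | [], c, f => rfl
  | p :: L, c, f => by
    simp only [bf_cons, bf_smul L]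
    ring

lemma bf_const : ∀ (L : List ℝ) (c : ℝ), bf L (fun _ => c) = c
  | [], c => rfl
  | p :: L, c => by simp only [bf_cons, bf_const L]; ring

lemma bf_sub (L : List ℝ) (f g : ℕ → ℝ) :
    bf L (fun e => f e - g e) = bf L f - bf L g := by
  have := bf_add L g (fun e => f e - g e)
  simp only [add_sub_cancel] at this
  rw [bf_congr L _ (fun e => f e) (by intro e _; ring)] at this
  linarith

lemma bf_perm' {L L' : List ℝ} (h : L.Perm L') : ∀ f, bf L f = bf L' f := by
  induction h with
  | nil => intro f; rfl
  | cons x _ ih => intro f; simp only [bf_cons, ih]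
  | swap x y l => intro f; simp only [bf_cons]; ring_nf
  | trans _ _ ih1 ih2 => intro f; rw [ih1, ih2]

lemma bf_le_const (L : List ℝ) (f : ℕ → ℝ) (c : ℝ)
    (hx : ∀ x ∈ L, 0 ≤ x ∧ x ≤ 1) (h : ∀ e ≤ L.length, f e ≤ c) : bf L f ≤ c := by
  have := bf_mono L f (fun _ => c) hx h
  rwa [bf_const] at this

lemma const_le_bf (L : List ℝ) (f : ℕ → ℝ) (c : ℝ)
    (hx : ∀ x ∈ L, 0 ≤ x ∧ x ≤ 1) (h : ∀ e ≤ L.length, c ≤ f e) : c ≤ bf L f := by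
  have := bf_mono L (fun _ => c) f hx h
  rwa [bf_const] at this

open Finset in
lemma sum_powerset_bf {ι : Type*} [DecidableEq ι] :
    ∀ (S : Finset ι) (ω : ι → ℝ) (f : ℕ → ℝ),
    ∑ A ∈ S.powerset, (∏ i ∈ A, ω i) * (∏ i ∈ S \ A, (1 - ω i)) * f A.card
      = bf (S.toList.map ω) f := by
  intro S
  induction S using Finset.induction_on with
  | empty => intro ω f; simp
  | @insert a S ha ih =>
    intro ω f
    rw [Finset.sum_powerset_insert ha]
    have h1 : ∀ A ∈ S.powerset, (∏ i ∈ A, ω i) * (∏ i ∈ insert a S \ A, (1 - ω i)) * f A.card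
        = (1 - ω a) * ((∏ i ∈ A, ω i) * (∏ i ∈ S \ A, (1 - ω i)) * f A.card) := by
      intro A hA
      rw [Finset.mem_powerset] at hA
      have haA : a ∉ A := fun h => ha (hA h)
      have : insert a S \ A = insert a (S \ A) := by
        ext x; simp only [Finset.mem_sdiff, Finset.mem_insert]
        constructor
        · rintro ⟨h1 | h1, h2⟩
          · exact Or.inl h1
          · exact Or.inr ⟨h1, h2⟩
        · rintro (rfl | ⟨h1, h2⟩)
          · exact ⟨Or.inl rfl, haA⟩
          · exact ⟨Or.inr h1, h2⟩
      rw [this, Finset.prod_insert (by simp [ha, Finset.mem_sdiff])]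
      ring
    have h2 : ∀ A ∈ S.powerset, (∏ i ∈ insert a A, ω i) * (∏ i ∈ insert a S \ insert a A, (1 - ω i)) * f (insert a A).card
        = ω a * ((∏ i ∈ A, ω i) * (∏ i ∈ S \ A, (1 - ω i)) * f (A.card + 1)) := by
      intro A hA
      rw [Finset.mem_powerset] at hA
      have haA : a ∉ A := fun h => ha (hA h)
      have hd : insert a S \ insert a A = S \ A := by
        ext x; simp only [Finset.mem_sdiff, Finset.mem_insert, not_or]
        constructor
        · rintro ⟨h1 | h1, h2, h3⟩
          · exact absurd h1 h2
          · exact ⟨h1, h3⟩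
        · rintro ⟨h1, h2⟩
          exact ⟨Or.inr h1, fun h => ha (h ▸ h1), h2⟩
      rw [hd, Finset.prod_insert haA, Finset.card_insert_of_notMem haA]
      ring
    rw [Finset.sum_congr rfl h1, Finset.sum_congr rfl h2, ← Finset.mul_sum, ← Finset.mul_sum,
        ih ω f, ih ω (fun e => f (e + 1))]
    have hperm : ((insert a S).toList.map ω).Perm (ω a :: S.toList.map ω) := by
      exact ((Finset.toList_insert ha).map ω)
    rw [bf_perm' hperm]
    simp only [bf_cons]
    ring

namespace L1
variable (p01 p11 β : ℝ) (k m : ℕ)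
def nxt (e : ℕ) (R : List ℝ) : List ℝ :=
  List.replicate e p11 ++ R.map (tau p01 p11) ++ List.replicate (k - e) p01
def rmin (m e : ℕ) : ℝ := ((min e m : ℕ) : ℝ)
noncomputable def Wl : ℕ → List ℝ → ℝ
  | 0, L => bf (L.take k) (rmin m)
  | s + 1, L => bf (L.take k)
      (fun e => rmin m e + β * Wl s (nxt p01 p11 k e (L.drop k)))
lemma bf_congr' : ∀ (L : List ℝ) (f g : ℕ → ℝ), (∀ e ≤ L.length, f e = g e) →
    bf L f = bf L g
  | [], f, g, h => h 0 (by simp)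
  | p :: L, f, g, h => by
    simp only [bf_cons]
    rw [bf_congr' L _ _ (fun e he => h (e+1) (by simpa using he)),
        bf_congr' L f g (fun e he => h e (by simp; omega))]
lemma bf_add : ∀ (L : List ℝ) (f g : ℕ → ℝ),
    bf L (fun e => f e + g e) = bf L f + bf L g
  | [], f, g => rfl
  | p :: L, f, g => by simp only [bf_cons, bf_add L]; ring
lemma bf_smul : ∀ (L : List ℝ) (c : ℝ) (f : ℕ → ℝ),
    bf L (fun e => c * f e) = c * bf L f
  | [], c, f => rfl
  | p :: L, c, f => by simp only [bf_cons, bf_smul L]; ring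

-- take/drop helpers
lemma take_app_lt {A : List ℝ} (x : ℝ) (B : List ℝ) (h : A.length < k) :
    (A ++ x :: B).take k = A ++ x :: B.take (k - A.length - 1) := by
  rw [List.take_append, List.take_of_length_le (by omega)]
  congr 1
  rw [show k - A.length = (k - A.length - 1) + 1 by omega, List.take_succ_cons]
  simp
lemma drop_app_lt {A : List ℝ} (x : ℝ) (B : List ℝ) (h : A.length < k) :
    (A ++ x :: B).drop k = B.drop (k - A.length - 1) := by
  rw [List.drop_append, List.drop_eq_nil_of_le (by omega), List.nil_append,
      show k - A.length = (k - A.length - 1) + 1 by omega, List.drop_succ_cons]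
  simp
lemma take_app_ge {A : List ℝ} (B : List ℝ) (h : k ≤ A.length) :
    (A ++ B).take k = A.take k := by
  rw [List.take_append, Nat.sub_eq_zero_of_le h, List.take_zero, List.append_nil]
lemma drop_app_ge {A : List ℝ} (B : List ℝ) (h : k ≤ A.length) :
    (A ++ B).drop k = A.drop k ++ B := by
  rw [List.drop_append, Nat.sub_eq_zero_of_le h, List.drop_zero]

lemma Wl_perm {L L' : List ℝ} (h1 : (L.take k).Perm (L'.take k))
    (h2 : L.drop k = L'.drop k) : ∀ s, Wl p01 p11 β k m s L = Wl p01 p11 β k m s L'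
  | 0 => by simp only [Wl]; exact bf_perm' h1 _
  | (s+1) => by simp only [Wl]; rw [bf_perm' h1, h2]

lemma bf_take_cons (A B : List ℝ) (x : ℝ) (hA : A.length < k) (f : ℕ → ℝ) :
    bf ((A ++ x :: B).take k) f
      = x * bf (A ++ B.take (k - A.length - 1)) (fun e => f (e + 1))
        + (1 - x) * bf (A ++ B.take (k - A.length - 1)) f := by
  rw [take_app_lt k x B hA, bf_perm' (List.perm_middle (a := x) (l₁ := A))]
  rfl

lemma tau_affine (θ u v : ℝ) :
    tau p01 p11 (θ * u + (1 - θ) * v) = θ * tau p01 p11 u + (1 - θ) * tau p01 p11 v := by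
  unfold tau; ring

lemma Wl_affine : ∀ (s : ℕ) (A B : List ℝ) (θ u v : ℝ),
    Wl p01 p11 β k m s (A ++ (θ * u + (1 - θ) * v) :: B)
      = θ * Wl p01 p11 β k m s (A ++ u :: B) + (1 - θ) * Wl p01 p11 β k m s (A ++ v :: B) := by
  intro s
  induction s with
  | zero =>
    intro A B θ u v
    simp only [Wl]
    rcases lt_or_ge A.length k with hA | hA
    · rw [bf_take_cons k A B _ hA, bf_take_cons k A B _ hA,
          bf_take_cons k A B _ hA]
      ring
    · rw [take_app_ge k _ hA, take_app_ge k _ hA, take_app_ge k _ hA]; ring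
  | succ s ih =>
    intro A B θ u v
    simp only [Wl]
    rcases lt_or_ge A.length k with hA | hA
    · rw [drop_app_lt k _ B hA, drop_app_lt k _ B hA, drop_app_lt k _ B hA,
          bf_take_cons k A B _ hA, bf_take_cons k A B _ hA,
          bf_take_cons k A B _ hA]
      ring
    · rw [drop_app_ge k _ hA, drop_app_ge k _ hA, drop_app_ge k _ hA,
          take_app_ge k _ hA, take_app_ge k _ hA, take_app_ge k _ hA]
      have hnxt : ∀ (e : ℕ) (x : ℝ), nxt p01 p11 k e (A.drop k ++ x :: B)
          = (List.replicate e p11 ++ (A.drop k).map (tau p01 p11))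
            ++ tau p01 p11 x :: (B.map (tau p01 p11) ++ List.replicate (k - e) p01) := by
        intro e x
        simp [nxt, List.map_append, List.append_assoc]
      have key : ∀ e : ℕ,
          Wl p01 p11 β k m s (nxt p01 p11 k e (A.drop k ++ (θ * u + (1 - θ) * v) :: B))
            = θ * Wl p01 p11 β k m s (nxt p01 p11 k e (A.drop k ++ u :: B))
              + (1 - θ) * Wl p01 p11 β k m s (nxt p01 p11 k e (A.drop k ++ v :: B)) := by
        intro e
        rw [hnxt, hnxt, hnxt, tau_affine, ih]
      have : (fun e => rmin m e + β * Wl p01 p11 β k m s (nxt p01 p11 k e (A.drop k ++ (θ * u + (1 - θ) * v) :: B)))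
          = fun e => θ * (rmin m e + β * Wl p01 p11 β k m s (nxt p01 p11 k e (A.drop k ++ u :: B)))
            + (1 - θ) * (rmin m e + β * Wl p01 p11 β k m s (nxt p01 p11 k e (A.drop k ++ v :: B))) := by
        funext e; rw [key e]; ring
      rw [this, bf_add, bf_smul, bf_smul]

lemma Wl_tau_peel (s : ℕ) (A B : List ℝ) (y : ℝ) :
    Wl p01 p11 β k m s (A ++ tau p01 p11 y :: B)
      = y * Wl p01 p11 β k m s (A ++ p11 :: B)
        + (1 - y) * Wl p01 p11 β k m s (A ++ p01 :: B) := by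
  have h : tau p01 p11 y = y * p11 + (1 - y) * p01 := by unfold tau; ring
  rw [h, Wl_affine]

lemma Wl_expand (hk1 : 1 ≤ k) (s : ℕ) (M : List ℝ) (w : ℝ) (R : List ℝ)
    (hM : M.length = k - 1) :
    Wl p01 p11 β k m (s + 1) (M ++ w :: R)
      = bf M (fun e =>
          w * (rmin m (e+1) + β * Wl p01 p11 β k m s (nxt p01 p11 k (e+1) R))
          + (1 - w) * (rmin m e + β * Wl p01 p11 β k m s (nxt p01 p11 k e R))) := by
  have hA : M.length < k := by omega
  simp only [Wl]
  rw [drop_app_lt k _ R hA, bf_take_cons k M R _ hA]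
  rw [show k - M.length - 1 = 0 by omega]
  simp only [List.take_zero, List.drop_zero, List.append_nil]
  conv_rhs => rw [bf_add, bf_smul, bf_smul]

variable {N : ℕ}


lemma take_finRange (hk : k ≤ N) :
    ∀ a : Fin N, a ∈ (List.finRange N).take k ↔ (a : ℕ) < k := by
  intro a
  constructor
  · intro h
    rcases List.mem_iff_getElem.1 h with ⟨j, hj, hja⟩
    have hjl : j < k := by simp [List.length_take] at hj; omega
    rw [List.getElem_take] at hja
    rw [← hja]
    simpa using hjl
  · intro h
    have hlt : (a : ℕ) < ((List.finRange N).take k).length := by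
      simp [List.length_take]; omega
    have : ((List.finRange N).take k)[(a : ℕ)] = a := by
      rw [List.getElem_take]; simp
    rw [← this]; exact List.getElem_mem _

lemma senseSet_perm (hk : k ≤ N) (ω : Fin N → ℝ) :
    ((senseSet N k).toList.map ω).Perm ((List.ofFn ω).take k) := by
  have h1 : (senseSet N k).toList.Perm ((List.finRange N).take k) := by
    rw [List.perm_ext_iff_of_nodup (Finset.nodup_toList _) ((List.take_sublist _ _).nodup (List.nodup_finRange N))]
    intro a
    rw [Finset.mem_toList, take_finRange k hk a]
    simp [senseSet]
  have h2 : (List.ofFn ω).take k = ((List.finRange N).take k).map ω := by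
    rw [List.ofFn_eq_map, List.map_take]
  rw [h2]
  exact h1.map ω

lemma ofFn_nextPos (hk : k ≤ N) (c : ℕ) (hc : c ≤ k) (ω : Fin N → ℝ) :
    List.ofFn (nextPos p01 p11 k ω c) = nxt p01 p11 k c ((List.ofFn ω).drop k) := by
  apply List.ext_getElem
  · simp [nxt]; omega
  intro i h1 h2
  simp only [List.getElem_ofFn, nextPos, nxt]
  have hN : i < N := by simpa using h1
  have hlenA : (List.replicate c p11 ++ ((List.ofFn ω).drop k).map (tau p01 p11)).length
      = c + (N - k) := by simp
  by_cases hic : i < c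
  · rw [List.getElem_append_left (by omega), List.getElem_append_left (by simpa using hic),
        List.getElem_replicate]
    simp [hic]
  · by_cases him : i < c + (N - k)
    · rw [List.getElem_append_left (by omega), List.getElem_append_right (by simpa using hic)]
      simp only [List.getElem_map, List.getElem_drop, List.getElem_ofFn, List.length_replicate]
      rw [dif_neg hic, dif_pos him]
    · rw [List.getElem_append_right (by omega)]
      simp only [List.getElem_replicate]
      rw [dif_neg hic, dif_neg him]




lemma Wpos_eq_Wl (hk : k ≤ N) : ∀ (s : ℕ) (ω : Fin N → ℝ),
    Wpos p01 p11 β N k m s ω = Wl p01 p11 β k m s (List.ofFn ω) := by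
  intro s
  induction s with
  | zero =>
    intro ω
    show expReward m (senseSet N k) ω = _
    rw [expReward, sum_powerset_bf (senseSet N k) ω (fun e => ((min e m : ℕ) : ℝ)),
        bf_perm' (senseSet_perm k hk ω)]
    rfl
  | succ s ih =>
    intro ω
    show expReward m (senseSet N k) ω + β * _ = _
    have hlen : ((List.ofFn ω).take k).length = k := by simp [List.length_take]; omega
    rw [expReward, sum_powerset_bf (senseSet N k) ω (fun e => ((min e m : ℕ) : ℝ)),
        sum_powerset_bf (senseSet N k) ω
          (fun e => Wpos p01 p11 β N k m s (nextPos p01 p11 k ω e)),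
        bf_perm' (senseSet_perm k hk ω), bf_perm' (senseSet_perm k hk ω)]
    have hc : bf ((List.ofFn ω).take k)
          (fun e => Wpos p01 p11 β N k m s (nextPos p01 p11 k ω e))
        = bf ((List.ofFn ω).take k)
          (fun e => Wl p01 p11 β k m s (nxt p01 p11 k e ((List.ofFn ω).drop k))) := by
      apply bf_congr'
      intro e he
      rw [hlen] at he
      rw [ih (nextPos p01 p11 k ω e), ofFn_nextPos p01 p11 k hk e he ω]
    rw [hc]
    show _ = bf ((List.ofFn ω).take k)
      (fun e => rmin m e + β * Wl p01 p11 β k m s (nxt p01 p11 k e ((List.ofFn ω).drop k)))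
    rw [bf_add, bf_smul]
    rfl

end L1

namespace L1
variable (p01 p11 β : ℝ) (k m : ℕ)

lemma univ_toList_perm (n : ℕ) : (Finset.univ : Finset (Fin n)).toList.Perm (List.finRange n) := by
  rw [List.perm_ext_iff_of_nodup (Finset.nodup_toList _) (List.nodup_finRange n)]
  intro a
  simp [Finset.mem_toList, List.mem_finRange]

lemma bf_sub (L : List ℝ) (f g : ℕ → ℝ) :
    bf L (fun e => f e - g e) = bf L f - bf L g := by
  have := bf_add L g (fun e => f e - g e)
  simp only [add_sub_cancel] at this
  rw [bf_congr' L _ (fun e => f e) (by intro e _; ring)] at this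
  linarith

/-- the increment function -/
noncomputable def dmin (m e : ℕ) : ℝ := rmin m (e + 1) - rmin m e

lemma dmin_nonneg (e : ℕ) : 0 ≤ dmin m e := by
  unfold dmin rmin
  have : min e m ≤ min (e+1) m := by omega
  have := Nat.cast_le (α := ℝ) |>.2 this
  linarith

lemma dmin_le_one (e : ℕ) : dmin m e ≤ 1 := by
  unfold dmin rmin
  have h : min (e+1) m ≤ min e m + 1 := by omega
  have h2 := Nat.cast_le (α := ℝ) |>.2 h
  rw [Nat.cast_add, Nat.cast_one] at h2
  linarith

lemma expReward_cons (k' : ℕ) (w : ℝ) (x : Fin k' → ℝ) :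
    expReward m Finset.univ (Fin.cons w x)
      = w * bf (List.ofFn x) (fun e => rmin m (e + 1)) + (1 - w) * bf (List.ofFn x) (rmin m) := by
  rw [expReward, sum_powerset_bf Finset.univ (Fin.cons w x) (fun e => ((min e m : ℕ) : ℝ)),
      bf_perm' ((univ_toList_perm (k' + 1)).map (Fin.cons w x))]
  have hm : (List.finRange (k' + 1)).map (Fin.cons w x) = w :: List.ofFn x := by
    rw [List.finRange_succ, List.map_cons, List.map_map, List.ofFn_eq_map]
    simp [Function.comp]
  rw [hm, bf_cons]
  rfl

lemma rdiff_eq (k' : ℕ) (x : Fin k' → ℝ) :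
    expReward m Finset.univ (Fin.cons 1 x) - expReward m Finset.univ (Fin.cons 0 x)
      = bf (List.ofFn x) (dmin m) := by
  rw [expReward_cons, expReward_cons]
  have : bf (List.ofFn x) (dmin m)
      = bf (List.ofFn x) (fun e => rmin m (e+1)) - bf (List.ofFn x) (rmin m) := by
    rw [← bf_sub]; rfl
  rw [this]; ring

lemma mem_RdiffSet_list (M : List ℝ) (hrange : ∀ x ∈ M, p01 ≤ x ∧ x ≤ p11) :
    bf M (dmin m) ∈ RdiffSet p01 p11 m M.length := by
  refine ⟨fun i => M[(i : ℕ)], fun i => ?_, ?_⟩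
  · have := hrange _ (M.getElem_mem i.isLt)
    exact ⟨this.1, this.2⟩
  · rw [rdiff_eq]
    congr 1
    exact (List.ofFn_getElem (xs := M)).symm

lemma rdiff_bounds (h00 : 0 ≤ p01) (h11 : p11 ≤ 1) (k' : ℕ) :
    ∀ r ∈ RdiffSet p01 p11 m k', 0 ≤ r ∧ r ≤ 1 := by
  rintro r ⟨x, hx, rfl⟩
  rw [rdiff_eq]
  have hr : ∀ z ∈ List.ofFn x, 0 ≤ z ∧ z ≤ 1 := by
    intro z hz
    rw [List.mem_ofFn] at hz
    obtain ⟨i, rfl⟩ := hz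
    exact ⟨le_trans h00 (hx i).1, le_trans (hx i).2 h11⟩
  constructor
  · exact const_le_bf _ _ _ hr (fun e _ => dmin_nonneg m e)
  · exact bf_le_const _ _ _ hr (fun e _ => dmin_le_one m e)

lemma RdiffSet_nonempty (hp : p01 ≤ p11) (k' : ℕ) : (RdiffSet p01 p11 m k').Nonempty := by
  have := mem_RdiffSet_list p01 p11 m (List.replicate k' p01)
    (by intro x hx; rw [List.eq_of_mem_replicate hx]; exact ⟨le_refl _, hp⟩)
  rw [List.length_replicate] at this
  exact ⟨_, this⟩

lemma bddAbove_RdiffSet (h00 : 0 ≤ p01) (h11 : p11 ≤ 1) (k' : ℕ) :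
    BddAbove (RdiffSet p01 p11 m k') :=
  ⟨1, fun r hr => (rdiff_bounds p01 p11 m h00 h11 k' r hr).2⟩

lemma bddBelow_RdiffSet (h00 : 0 ≤ p01) (h11 : p11 ≤ 1) (k' : ℕ) :
    BddBelow (RdiffSet p01 p11 m k') :=
  ⟨0, fun r hr => (rdiff_bounds p01 p11 m h00 h11 k' r hr).1⟩

lemma le_Rbar (h00 : 0 ≤ p01) (h11 : p11 ≤ 1) {k' : ℕ} {r : ℝ}
    (hr : r ∈ RdiffSet p01 p11 m k') : r ≤ Rbar p01 p11 m k' :=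
  le_csSup (bddAbove_RdiffSet p01 p11 m h00 h11 k') hr

lemma Rlow_le (h00 : 0 ≤ p01) (h11 : p11 ≤ 1) {k' : ℕ} {r : ℝ}
    (hr : r ∈ RdiffSet p01 p11 m k') : Rlow p01 p11 m k' ≤ r :=
  csInf_le (bddBelow_RdiffSet p01 p11 m h00 h11 k') hr

lemma Rbar_nonneg (hp : p01 ≤ p11) (h00 : 0 ≤ p01) (h11 : p11 ≤ 1) (k' : ℕ) :
    0 ≤ Rbar p01 p11 m k' := by
  obtain ⟨r, hr⟩ := RdiffSet_nonempty p01 p11 m hp k'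
  exact le_trans (rdiff_bounds p01 p11 m h00 h11 k' r hr).1 (le_Rbar p01 p11 m h00 h11 hr)

end L1

namespace L1
variable (p01 p11 β : ℝ) (k m N : ℕ)

/-- All context hypotheses bundled. -/
structure Ctx (p01 p11 β : ℝ) (k m N : ℕ) : Prop where
  h00 : 0 ≤ p01
  h11 : p11 ≤ 1
  hp : p01 ≤ p11
  hb0 : 0 ≤ β
  hb1 : β ≤ 1
  hk1 : 1 ≤ k
  hkN : k ≤ N
  hcond : β * Rbar p01 p11 m (k - 1) ≤ Rlow p01 p11 m (k - 1)

def InR (p01 p11 : ℝ) (L : List ℝ) : Prop := ∀ x ∈ L, p01 ≤ x ∧ x ≤ p11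

lemma InR_append_iff {L1 L2 : List ℝ} :
    InR p01 p11 (L1 ++ L2) ↔ InR p01 p11 L1 ∧ InR p01 p11 L2 := by
  unfold InR
  constructor
  · intro h; exact ⟨fun x hx => h x (by simp [hx]), fun x hx => h x (by simp [hx])⟩
  · rintro ⟨h1, h2⟩ x hx
    rcases List.mem_append.1 hx with h | h
    exacts [h1 x h, h2 x h]

lemma InR_cons_iff {x : ℝ} {L : List ℝ} :
    InR p01 p11 (x :: L) ↔ (p01 ≤ x ∧ x ≤ p11) ∧ InR p01 p11 L := by
  unfold InR
  constructor
  · intro h; exact ⟨h x (by simp), fun z hz => h z (by simp [hz])⟩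
  · rintro ⟨h1, h2⟩ z hz
    rcases List.mem_cons.1 hz with rfl | h
    exacts [h1, h2 z h]

lemma InR_replicate {x : ℝ} (h : p01 ≤ x ∧ x ≤ p11) (n : ℕ) :
    InR p01 p11 (List.replicate n x) := by
  intro z hz; rw [List.eq_of_mem_replicate hz]; exact h

lemma tau_mem (h00 : 0 ≤ p01) (h11 : p11 ≤ 1) (hp : p01 ≤ p11) {y : ℝ}
    (hy : 0 ≤ y ∧ y ≤ 1) : p01 ≤ tau p01 p11 y ∧ tau p01 p11 y ≤ p11 := by
  unfold tau; constructor <;> nlinarith [hy.1, hy.2]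

lemma tau_mono (hp : p01 ≤ p11) {x y : ℝ} (h : y ≤ x) :
    tau p01 p11 y ≤ tau p01 p11 x := by
  unfold tau; nlinarith

lemma InR01 (h00 : 0 ≤ p01) (h11 : p11 ≤ 1) {L : List ℝ} (h : InR p01 p11 L) :
    ∀ x ∈ L, 0 ≤ x ∧ x ≤ 1 := fun x hx =>
  ⟨le_trans h00 (h x hx).1, le_trans (h x hx).2 h11⟩

lemma InR_map_tau (h00 : 0 ≤ p01) (h11 : p11 ≤ 1) (hp : p01 ≤ p11) {L : List ℝ}
    (h : InR p01 p11 L) : InR p01 p11 (L.map (tau p01 p11)) := by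
  intro z hz
  rw [List.mem_map] at hz
  obtain ⟨y, hy, rfl⟩ := hz
  exact tau_mem p01 p11 h00 h11 hp (InR01 p01 p11 h00 h11 h y hy)

lemma InR_perm {L L' : List ℝ} (h : L.Perm L') (hL : InR p01 p11 L) : InR p01 p11 L' :=
  fun x hx => hL x (h.symm.subset hx)

/-- absorb a leading p11 into the replicate prefix -/
lemma repl_absorb (x : ℝ) (e : ℕ) (X : List ℝ) :
    List.replicate e x ++ x :: X = List.replicate (e + 1) x ++ X := by
  rw [List.replicate_succ', List.append_assoc]; rfl

def SWp (s : ℕ) : Prop := ∀ C D : List ℝ, ∀ x y : ℝ, InR p01 p11 (C ++ x :: y :: D) →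
  (C ++ x :: y :: D).length = N → y ≤ x →
  Wl p01 p11 β k m s (C ++ y :: x :: D) ≤ Wl p01 p11 β k m s (C ++ x :: y :: D)

def MVp (s : ℕ) : Prop := ∀ C B D : List ℝ, ∀ a : ℝ, InR p01 p11 (C ++ B ++ a :: D) →
  (C ++ B ++ a :: D).length = N → (∀ b ∈ B, a ≤ b) →
  Wl p01 p11 β k m s (C ++ B ++ a :: D)
    ≤ Wl p01 p11 β k m s (C ++ a :: (B ++ D)) + Rbar p01 p11 m (k - 1)

/-- moving a maximal element left (repeated swaps) -/
lemma moveBigLeft (hc : Ctx p01 p11 β k m N) {s : ℕ} (hSW : SWp p01 p11 β k m N s) :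
    ∀ (B C D : List ℝ) (z : ℝ), (∀ b ∈ B, b ≤ z) →
      InR p01 p11 (C ++ z :: (B ++ D)) → (C ++ z :: (B ++ D)).length = N →
      Wl p01 p11 β k m s (C ++ B ++ z :: D) ≤ Wl p01 p11 β k m s (C ++ z :: (B ++ D)) := by
  intro B
  induction B with
  | nil => intro C D z _ _ _; simp
  | cons b B' ih =>
    intro C D z hbz hIn hlen
    have hperm : (C ++ z :: (b :: B' ++ D)).Perm (C ++ b :: z :: (B' ++ D)) := by
      refine List.Perm.append_left C ?_
      exact List.Perm.swap b z (B' ++ D)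
    have hIn' : InR p01 p11 (C ++ b :: z :: (B' ++ D)) := InR_perm p01 p11 hperm hIn
    have hlen' : (C ++ b :: z :: (B' ++ D)).length = N := by
      rw [← hperm.length_eq]; simpa using hlen
    have step1 : Wl p01 p11 β k m s ((C ++ [b]) ++ B' ++ z :: D)
        ≤ Wl p01 p11 β k m s ((C ++ [b]) ++ z :: (B' ++ D)) := by
      apply ih (C ++ [b]) D z (fun b' hb' => hbz b' (by simp [hb']))
      · simpa [List.append_assoc] using hIn'
      · simpa [List.append_assoc] using hlen'
    have step2 : Wl p01 p11 β k m s (C ++ b :: z :: (B' ++ D))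
        ≤ Wl p01 p11 β k m s (C ++ z :: b :: (B' ++ D)) :=
      hSW C (B' ++ D) z b (by simpa using hIn) (by simpa using hlen) (hbz b (by simp))
    calc Wl p01 p11 β k m s (C ++ b :: B' ++ z :: D)
        = Wl p01 p11 β k m s ((C ++ [b]) ++ B' ++ z :: D) := by simp [List.append_assoc]
      _ ≤ Wl p01 p11 β k m s ((C ++ [b]) ++ z :: (B' ++ D)) := step1
      _ = Wl p01 p11 β k m s (C ++ b :: z :: (B' ++ D)) := by simp [List.append_assoc]
      _ ≤ Wl p01 p11 β k m s (C ++ z :: b :: (B' ++ D)) := step2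

/-- moving a minimal element right (repeated swaps) -/
lemma moveSmallRight (hc : Ctx p01 p11 β k m N) {s : ℕ} (hSW : SWp p01 p11 β k m N s) :
    ∀ (B C D : List ℝ) (z : ℝ), (∀ b ∈ B, z ≤ b) →
      InR p01 p11 (C ++ z :: (B ++ D)) → (C ++ z :: (B ++ D)).length = N →
      Wl p01 p11 β k m s (C ++ z :: (B ++ D)) ≤ Wl p01 p11 β k m s (C ++ B ++ z :: D) := by
  intro B
  induction B with
  | nil => intro C D z _ _ _; simp
  | cons b B' ih =>
    intro C D z hbz hIn hlen
    have hperm : (C ++ z :: (b :: B' ++ D)).Perm (C ++ b :: z :: (B' ++ D)) := by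
      refine List.Perm.append_left C ?_
      exact List.Perm.swap b z (B' ++ D)
    have hIn' : InR p01 p11 (C ++ b :: z :: (B' ++ D)) := InR_perm p01 p11 hperm hIn
    have hlen' : (C ++ b :: z :: (B' ++ D)).length = N := by
      rw [← hperm.length_eq]; simpa using hlen
    have step2 : Wl p01 p11 β k m s (C ++ z :: b :: (B' ++ D))
        ≤ Wl p01 p11 β k m s (C ++ b :: z :: (B' ++ D)) :=
      hSW C (B' ++ D) b z (by simpa using hIn') (by simpa using hlen') (hbz b (by simp))
    have step1 : Wl p01 p11 β k m s ((C ++ [b]) ++ z :: (B' ++ D))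
        ≤ Wl p01 p11 β k m s ((C ++ [b]) ++ B' ++ z :: D) := by
      apply ih (C ++ [b]) D z (fun b' hb' => hbz b' (by simp [hb']))
      · simpa [List.append_assoc] using hIn'
      · simpa [List.append_assoc] using hlen'
    calc Wl p01 p11 β k m s (C ++ z :: (b :: B' ++ D))
        ≤ Wl p01 p11 β k m s (C ++ b :: z :: (B' ++ D)) := step2
      _ = Wl p01 p11 β k m s ((C ++ [b]) ++ z :: (B' ++ D)) := by simp [List.append_assoc]
      _ ≤ Wl p01 p11 β k m s ((C ++ [b]) ++ B' ++ z :: D) := step1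
      _ = Wl p01 p11 β k m s (C ++ b :: B' ++ z :: D) := by simp [List.append_assoc]

end L1
namespace L1
variable (p01 p11 β : ℝ) (k m N : ℕ)

lemma Wl0_expand (hk1 : 1 ≤ k) (M : List ℝ) (w : ℝ) (R : List ℝ) (hM : M.length = k - 1) :
    Wl p01 p11 β k m 0 (M ++ w :: R)
      = w * bf M (fun e => rmin m (e + 1)) + (1 - w) * bf M (rmin m) := by
  simp only [Wl]
  rw [bf_take_cons k M R w (by omega), show k - M.length - 1 = 0 by omega]
  simp only [List.take_zero, List.append_nil]

lemma bf_dmin_eq (M : List ℝ) :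
    bf M (dmin m) = bf M (fun e => rmin m (e + 1)) - bf M (rmin m) := by
  rw [← bf_sub]; rfl

lemma bf_dmin_bounds (hc : Ctx p01 p11 β k m N) {M : List ℝ} (hM : M.length = k - 1)
    (hIn : InR p01 p11 M) :
    0 ≤ bf M (dmin m) ∧ bf M (dmin m) ≤ Rbar p01 p11 m (k - 1)
      ∧ Rlow p01 p11 m (k - 1) ≤ bf M (dmin m) := by
  have hmem : bf M (dmin m) ∈ RdiffSet p01 p11 m (k - 1) := by
    have := mem_RdiffSet_list p01 p11 m M hIn
    rwa [hM] at this
  exact ⟨(rdiff_bounds p01 p11 m hc.h00 hc.h11 (k-1) _ hmem).1,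
    le_Rbar p01 p11 m hc.h00 hc.h11 hmem, Rlow_le p01 p11 m hc.h00 hc.h11 hmem⟩

lemma Rbar_nn (hc : Ctx p01 p11 β k m N) : 0 ≤ Rbar p01 p11 m (k - 1) :=
  Rbar_nonneg p01 p11 m hc.hp hc.h00 hc.h11 (k - 1)

/-- `Wl` invariance for the "window fully sensed" swap case. -/
lemma swap_sensed_eq {C D : List ℝ} (x y : ℝ)
    (hC : C.length + 2 ≤ k) (s : ℕ) :
    Wl p01 p11 β k m s (C ++ y :: x :: D) = Wl p01 p11 β k m s (C ++ x :: y :: D) := by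
  apply Wl_perm
  · rw [take_app_lt k _ _ (by omega), take_app_lt k _ _ (by omega),
        show k - C.length - 1 = (k - C.length - 2) + 1 by omega,
        List.take_succ_cons, List.take_succ_cons]
    exact List.Perm.append_left C (List.Perm.swap x y _)
  · rw [drop_app_lt k _ _ (by omega), drop_app_lt k _ _ (by omega),
        show k - C.length - 1 = (k - C.length - 2) + 1 by omega,
        List.drop_succ_cons, List.drop_succ_cons]

/-- `Wl` invariance for the "window fully sensed" move case. -/
lemma move_sensed_eq {C B D : List ℝ} (a : ℝ)
    (hq : C.length + B.length + 1 ≤ k) (s : ℕ) :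
    Wl p01 p11 β k m s (C ++ B ++ a :: D) = Wl p01 p11 β k m s (C ++ a :: (B ++ D)) := by
  have hC : C.length < k := by omega
  have hCB : (C ++ B).length < k := by simp; omega
  have hidx : k - C.length - 1 - B.length = k - (C ++ B).length - 1 := by simp; omega
  apply Wl_perm
  · rw [take_app_lt k _ _ hCB, take_app_lt k _ _ hC]
    have h1 : (B ++ D).take (k - C.length - 1)
        = B ++ D.take (k - (C ++ B).length - 1) := by
      rw [List.take_append, List.take_of_length_le (by omega), hidx]
    rw [h1, List.append_assoc]
    exact List.Perm.append_left C List.perm_middle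
  · rw [drop_app_lt k _ _ hCB, drop_app_lt k _ _ hC, List.drop_append,
        List.drop_eq_nil_of_le (show B.length ≤ k - C.length - 1 by omega),
        List.nil_append, hidx]

/-- rearrangement of the `v`-side list in the straddle case of MV. -/
lemma v_rewrite {C B D : List ℝ} (a : ℝ) (hk1 : 1 ≤ k)
    (hCk : C.length < k) (hj : k - 1 - C.length < B.length) (s : ℕ) :
    Wl p01 p11 β k m s (C ++ a :: (B ++ D))
      = Wl p01 p11 β k m s ((C ++ B.take (k - 1 - C.length))
          ++ a :: ((B[k - 1 - C.length]'hj) :: (B.drop (k - C.length) ++ D))) := by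
  have hjk : k - 1 - C.length + 1 = k - C.length := by omega
  have hdropB : B.drop (k - 1 - C.length) = (B[k - 1 - C.length]'hj) :: B.drop (k - C.length) := by
    rw [List.drop_eq_getElem_cons hj, hjk]
  have hlenM : (C ++ B.take (k - 1 - C.length)).length = k - 1 := by
    simp [List.length_take]
    omega
  apply Wl_perm
  · rw [take_app_lt k _ _ hCk, take_app_lt k _ _ (by omega)]
    have h1 : (B ++ D).take (k - C.length - 1) = B.take (k - 1 - C.length) := by
      rw [List.take_append,
          show k - C.length - 1 = k - 1 - C.length by omega,
          show k - 1 - C.length - B.length = 0 by omega,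
          List.take_zero, List.append_nil]
    have h2 : k - (C ++ B.take (k - 1 - C.length)).length - 1 = 0 := by
      rw [hlenM]; omega
    rw [h1, h2, List.take_zero, List.append_assoc]
    exact List.Perm.append_left C (List.perm_append_singleton a _).symm
  · rw [drop_app_lt k _ _ hCk, drop_app_lt k _ _ (by omega)]
    rw [show k - (C ++ B.take (k - 1 - C.length)).length - 1 = 0 by rw [hlenM]; omega,
        List.drop_zero, List.drop_append,
        show k - C.length - 1 = k - 1 - C.length by omega,
        show k - 1 - C.length - B.length = 0 by omega, List.drop_zero, hdropB]
    rfl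

lemma SW0 (hc : Ctx p01 p11 β k m N) : SWp p01 p11 β k m N 0 := by
  intro C D x y hIn hlen hyx
  rcases lt_trichotomy (C.length + 2) (k + 1) with hC | hC | hC
  · rw [swap_sensed_eq p01 p11 β k m x y (by omega)]
  · -- straddle: C.length = k - 1
    have hCl : C.length = k - 1 := by omega
    rw [show C ++ y :: x :: D = C ++ y :: (x :: D) from rfl,
        show C ++ x :: y :: D = C ++ x :: (y :: D) from rfl,
        Wl0_expand p01 p11 β k m hc.hk1 C y (x :: D) hCl,
        Wl0_expand p01 p11 β k m hc.hk1 C x (y :: D) hCl]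
    have hInC : InR p01 p11 C := ((InR_append_iff p01 p11).1 hIn).1
    have hd := bf_dmin_bounds p01 p11 β k m N hc hCl hInC
    have heq := bf_dmin_eq m C
    nlinarith [mul_nonneg (sub_nonneg.2 hyx) hd.1]
  · -- fully unsensed
    have hC' : k ≤ C.length := by omega
    have e1 : Wl p01 p11 β k m 0 (C ++ y :: x :: D) = bf (C.take k) (rmin m) := by
      simp only [Wl]; rw [take_app_ge k _ hC']
    have e2 : Wl p01 p11 β k m 0 (C ++ x :: y :: D) = bf (C.take k) (rmin m) := by
      simp only [Wl]; rw [take_app_ge k _ hC']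
    rw [e1, e2]

lemma MV0 (hc : Ctx p01 p11 β k m N) : MVp p01 p11 β k m N 0 := by
  intro C B D a hIn hlen haB
  rcases lt_or_ge (C.length + B.length + 1) (k + 1) with hq | hq
  · rw [move_sensed_eq p01 p11 β k m a (by omega)]
    linarith [Rbar_nn p01 p11 β k m N hc]
  · rcases lt_or_ge C.length k with hCk | hCk
    · -- straddle
      have hj : k - 1 - C.length < B.length := by omega
      set j := k - 1 - C.length with hjdef
      set M := C ++ B.take j with hMdef
      set b1 := B[j]'hj with hb1def
      set Bs := B.drop (k - C.length) with hBsdef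
      have hM : M.length = k - 1 := by rw [hMdef]; simp [List.length_take]; omega
      have hdropB : B.drop j = b1 :: Bs := by
        rw [hb1def, hBsdef, List.drop_eq_getElem_cons hj, show j + 1 = k - C.length by omega]
      have hu : C ++ B ++ a :: D = M ++ b1 :: (Bs ++ a :: D) := by
        conv_lhs => rw [← List.take_append_drop j B]
        rw [hdropB, hMdef]
        simp [List.append_assoc]
      rw [hu] at hIn ⊢
      rw [v_rewrite p01 p11 β k m a hc.hk1 hCk hj 0]
      rw [Wl0_expand p01 p11 β k m hc.hk1 M b1 _ hM, Wl0_expand p01 p11 β k m hc.hk1 M a _ hM]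
      have hInM : InR p01 p11 M := ((InR_append_iff p01 p11).1 hIn).1
      have hIn2 := ((InR_append_iff p01 p11).1 hIn).2
      have hb1r : p01 ≤ b1 ∧ b1 ≤ p11 := ((InR_cons_iff p01 p11).1 hIn2).1
      have har : p01 ≤ a ∧ a ≤ p11 := by
        have := ((InR_cons_iff p01 p11).1 hIn2).2
        have := ((InR_append_iff p01 p11).1 this).2
        exact ((InR_cons_iff p01 p11).1 this).1
      have hab1 : a ≤ b1 := haB b1 (by rw [hb1def]; exact List.getElem_mem hj)
      have hd := bf_dmin_bounds p01 p11 β k m N hc hM hInM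
      have heq := bf_dmin_eq m M
      have hba1 : b1 - a ≤ 1 := by
        have := hb1r.2; have := har.1; linarith [hc.h00, hc.h11]
      have hkey : (b1 - a) * (bf M (dmin m)) ≤ Rbar p01 p11 m (k - 1) := by
        nlinarith [mul_le_mul_of_nonneg_right hba1 hd.1]
      rw [heq] at hkey
      nlinarith [hkey]
    · -- fully unsensed
      have e1 : Wl p01 p11 β k m 0 (C ++ B ++ a :: D) = bf (C.take k) (rmin m) := by
        simp only [Wl]
        rw [show C ++ B ++ a :: D = C ++ (B ++ a :: D) by simp [List.append_assoc],
            take_app_ge k _ hCk]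
      have e2 : Wl p01 p11 β k m 0 (C ++ a :: (B ++ D)) = bf (C.take k) (rmin m) := by
        simp only [Wl]; rw [take_app_ge k _ hCk]
      rw [e1, e2]
      linarith [Rbar_nn p01 p11 β k m N hc]

end L1

namespace L1
variable (p01 p11 β : ℝ) (k m N : ℕ)

lemma InR_p11 (hc : Ctx p01 p11 β k m N) (n : ℕ) : InR p01 p11 (List.replicate n p11) :=
  InR_replicate p01 p11 ⟨hc.hp, le_refl _⟩ n
lemma InR_p01 (hc : Ctx p01 p11 β k m N) (n : ℕ) : InR p01 p11 (List.replicate n p01) :=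
  InR_replicate p01 p11 ⟨le_refl _, hc.hp⟩ n
lemma InR_tauL (hc : Ctx p01 p11 β k m N) {L : List ℝ} (h : InR p01 p11 L) :
    InR p01 p11 (L.map (tau p01 p11)) :=
  InR_map_tau p01 p11 hc.h00 hc.h11 hc.hp h

lemma SWstep (hc : Ctx p01 p11 β k m N) (s : ℕ)
    (ihSW : SWp p01 p11 β k m N s) (ihMV : MVp p01 p11 β k m N s) :
    SWp p01 p11 β k m N (s + 1) := by
  intro C D x y hIn hlen hyx
  have hInC : InR p01 p11 C := ((InR_append_iff p01 p11).1 hIn).1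
  have hInxyD := ((InR_append_iff p01 p11).1 hIn).2
  have hxr : p01 ≤ x ∧ x ≤ p11 := ((InR_cons_iff p01 p11).1 hInxyD).1
  have hyD := ((InR_cons_iff p01 p11).1 hInxyD).2
  have hyr : p01 ≤ y ∧ y ≤ p11 := ((InR_cons_iff p01 p11).1 hyD).1
  have hInD : InR p01 p11 D := ((InR_cons_iff p01 p11).1 hyD).2
  rcases lt_trichotomy (C.length + 2) (k + 1) with hC | hC | hC
  · rw [swap_sensed_eq p01 p11 β k m x y (by omega)]
  · -- straddle : C.length = k - 1
    have hCl : C.length = k - 1 := by omega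
    have hlen' : C.length + 2 + D.length = N := by simp at hlen; omega
    set τD := D.map (tau p01 p11) with hτD
    set P : ℕ → ℝ := fun c =>
      Wl p01 p11 β k m s (List.replicate c p11 ++ p11 :: (τD ++ List.replicate (k - c) p01)) with hP
    set Q : ℕ → ℝ := fun c =>
      Wl p01 p11 β k m s (List.replicate c p11 ++ p01 :: (τD ++ List.replicate (k - c) p01)) with hQ
    have hpeel : ∀ (c : ℕ) (w : ℝ),
        Wl p01 p11 β k m s (nxt p01 p11 k c (w :: D)) = w * P c + (1 - w) * Q c := by
      intro c w
      have hnn : nxt p01 p11 k c (w :: D)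
          = List.replicate c p11 ++ tau p01 p11 w :: (τD ++ List.replicate (k - c) p01) := by
        simp [nxt, hτD, List.append_assoc]
      rw [hnn, Wl_tau_peel, hP, hQ]
    have hu : Wl p01 p11 β k m (s+1) (C ++ x :: y :: D)
        = bf C (fun e =>
            x * (rmin m (e+1) + β * (y * P (e+1) + (1-y) * Q (e+1)))
            + (1-x) * (rmin m e + β * (y * P e + (1-y) * Q e))) := by
      rw [show C ++ x :: y :: D = C ++ x :: (y :: D) from rfl,
          Wl_expand p01 p11 β k m hc.hk1 s C x (y :: D) hCl]
      apply bf_congr'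
      intro e _
      rw [hpeel (e+1) y, hpeel e y]
    have hv : Wl p01 p11 β k m (s+1) (C ++ y :: x :: D)
        = bf C (fun e =>
            y * (rmin m (e+1) + β * (x * P (e+1) + (1-x) * Q (e+1)))
            + (1-y) * (rmin m e + β * (x * P e + (1-x) * Q e))) := by
      rw [show C ++ y :: x :: D = C ++ y :: (x :: D) from rfl,
          Wl_expand p01 p11 β k m hc.hk1 s C y (x :: D) hCl]
      apply bf_congr'
      intro e _
      rw [hpeel (e+1) x, hpeel e x]
    have hdiff : Wl p01 p11 β k m (s+1) (C ++ x :: y :: D)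
        - Wl p01 p11 β k m (s+1) (C ++ y :: x :: D)
        = (x - y) * (bf C (dmin m) + β * bf C (fun e => Q (e+1) - P e)) := by
      rw [hu, hv, ← bf_sub]
      rw [show (fun e =>
            (x * (rmin m (e+1) + β * (y * P (e+1) + (1-y) * Q (e+1)))
            + (1-x) * (rmin m e + β * (y * P e + (1-y) * Q e)))
            - (y * (rmin m (e+1) + β * (x * P (e+1) + (1-x) * Q (e+1)))
            + (1-y) * (rmin m e + β * (x * P e + (1-x) * Q e))))
          = fun e => (x - y) * (dmin m e + β * (Q (e+1) - P e)) from
        funext fun e => by simp only [dmin]; ring]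
      rw [bf_smul, bf_add, bf_smul]
    have hQP : ∀ e ≤ C.length, - Rbar p01 p11 m (k-1) ≤ Q (e+1) - P e := by
      intro e he
      have heK : e ≤ k - 1 := hCl ▸ he
      have hPe : P e = Wl p01 p11 β k m s
          ((List.replicate (e+1) p11 ++ τD) ++ p01 :: List.replicate (k - (e+1)) p01) := by
        simp only [hP]
        rw [repl_absorb, show k - e = (k - (e+1)) + 1 by omega]
        simp [List.append_assoc, List.replicate_succ]
      have hQe : Q (e+1) = Wl p01 p11 β k m s
          (List.replicate (e+1) p11 ++ p01 :: (τD ++ List.replicate (k - (e+1)) p01)) := by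
        simp only [hQ]
      have := ihMV (List.replicate (e+1) p11) τD (List.replicate (k - (e+1)) p01) p01
        ?_ ?_ ?_
      · rw [hPe, hQe]
        linarith [this]
      · refine (InR_append_iff p01 p11).2 ⟨(InR_append_iff p01 p11).2
          ⟨InR_p11 p01 p11 β k m N hc _, InR_tauL p01 p11 β k m N hc hInD⟩,
          (InR_cons_iff p01 p11).2 ⟨⟨le_refl _, hc.hp⟩, InR_p01 p01 p11 β k m N hc _⟩⟩
      · simp [τD]
        omega
      · intro b hb
        rw [hτD, List.mem_map] at hb
        obtain ⟨z, hz, rfl⟩ := hb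
        exact (tau_mem p01 p11 hc.h00 hc.h11 hc.hp (InR01 p01 p11 hc.h00 hc.h11 hInD z hz)).1
    have hC01 := InR01 p01 p11 hc.h00 hc.h11 hInC
    have hbfQP : - Rbar p01 p11 m (k-1) ≤ bf C (fun e => Q (e+1) - P e) :=
      const_le_bf _ _ _ hC01 hQP
    have hd := bf_dmin_bounds p01 p11 β k m N hc hCl hInC
    have hβb : β * (- Rbar p01 p11 m (k-1)) ≤ β * bf C (fun e => Q (e+1) - P e) :=
      mul_le_mul_of_nonneg_left hbfQP hc.hb0
    have hpos : 0 ≤ bf C (dmin m) + β * bf C (fun e => Q (e+1) - P e) := by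
      have := hc.hcond
      linarith [hd.2.2]
    nlinarith [hdiff, mul_nonneg (sub_nonneg.2 hyx) hpos]
  · -- fully unsensed
    have hCk : k ≤ C.length := by omega
    simp only [Wl]
    rw [take_app_ge k _ hCk, take_app_ge k _ hCk, drop_app_ge k _ hCk, drop_app_ge k _ hCk]
    apply bf_mono
    · intro z hz
      exact InR01 p01 p11 hc.h00 hc.h11 hInC z (List.take_subset k C hz)
    · intro e he
      have hek : e ≤ k := by
        rw [List.length_take] at he
        omega
      have hInE : InR p01 p11 (C.drop k) := fun z hz => hInC z (List.drop_subset k C hz)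
      have hshape : ∀ u v : ℝ, nxt p01 p11 k e (C.drop k ++ u :: v :: D)
          = (List.replicate e p11 ++ (C.drop k).map (tau p01 p11))
            ++ tau p01 p11 u :: tau p01 p11 v :: (D.map (tau p01 p11) ++ List.replicate (k - e) p01) := by
        intro u v
        simp [nxt, List.append_assoc]
      have hsw := ihSW (List.replicate e p11 ++ (C.drop k).map (tau p01 p11))
        (D.map (tau p01 p11) ++ List.replicate (k - e) p01)
        (tau p01 p11 x) (tau p01 p11 y) ?_ ?_ (tau_mono p01 p11 hc.hp hyx)
      · rw [hshape x y, hshape y x]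
        have := mul_le_mul_of_nonneg_left hsw hc.hb0
        linarith [this]
      · refine (InR_append_iff p01 p11).2 ⟨(InR_append_iff p01 p11).2
          ⟨InR_p11 p01 p11 β k m N hc _, InR_tauL p01 p11 β k m N hc hInE⟩,
          (InR_cons_iff p01 p11).2 ⟨tau_mem p01 p11 hc.h00 hc.h11 hc.hp
            ⟨le_trans hc.h00 hxr.1, le_trans hxr.2 hc.h11⟩,
          (InR_cons_iff p01 p11).2 ⟨tau_mem p01 p11 hc.h00 hc.h11 hc.hp
            ⟨le_trans hc.h00 hyr.1, le_trans hyr.2 hc.h11⟩,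
          (InR_append_iff p01 p11).2 ⟨InR_tauL p01 p11 β k m N hc hInD,
            InR_p01 p01 p11 β k m N hc _⟩⟩⟩⟩
      · simp at hlen ⊢
        omega

end L1

namespace L1
variable (p01 p11 β : ℝ) (k m N : ℕ)

lemma MVstep (hc : Ctx p01 p11 β k m N) (s : ℕ)
    (ihSW : SWp p01 p11 β k m N s) (ihMV : MVp p01 p11 β k m N s) :
    MVp p01 p11 β k m N (s + 1) := by
  intro C B D a hIn hlen haB
  rcases lt_or_ge (C.length + B.length + 1) (k + 1) with hq | hq
  · rw [move_sensed_eq p01 p11 β k m a (by omega)]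
    linarith [Rbar_nn p01 p11 β k m N hc]
  rcases lt_or_ge C.length k with hCk | hCk
  swap
  · -- fully unsensed
    have e1 : C ++ B ++ a :: D = C ++ (B ++ a :: D) := by simp [List.append_assoc]
    rw [e1]
    simp only [Wl]
    rw [take_app_ge k _ hCk, take_app_ge k _ hCk, drop_app_ge k _ hCk, drop_app_ge k _ hCk]
    have hInC : InR p01 p11 C := by
      rw [e1] at hIn; exact ((InR_append_iff p01 p11).1 hIn).1
    have hrest := by rw [e1] at hIn; exact ((InR_append_iff p01 p11).1 hIn).2
    have hInB : InR p01 p11 B := ((InR_append_iff p01 p11).1 hrest).1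
    have haD := ((InR_append_iff p01 p11).1 hrest).2
    have har : p01 ≤ a ∧ a ≤ p11 := ((InR_cons_iff p01 p11).1 haD).1
    have hInD : InR p01 p11 D := ((InR_cons_iff p01 p11).1 haD).2
    have hInE : InR p01 p11 (C.drop k) := fun z hz => hInC z (List.drop_subset k C hz)
    have key : bf (C.take k)
        (fun e => rmin m e + β * Wl p01 p11 β k m s (nxt p01 p11 k e (C.drop k ++ (B ++ a :: D))))
        ≤ bf (C.take k)
        (fun e => (rmin m e + β * Wl p01 p11 β k m s (nxt p01 p11 k e (C.drop k ++ (a :: (B ++ D)))))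
          + β * Rbar p01 p11 m (k-1)) := by
      apply bf_mono
      · intro z hz
        exact InR01 p01 p11 hc.h00 hc.h11 hInC z (List.take_subset k C hz)
      · intro e he
        have hek : e ≤ k := by rw [List.length_take] at he; omega
        have hshape1 : nxt p01 p11 k e (C.drop k ++ (B ++ a :: D))
            = (List.replicate e p11 ++ (C.drop k).map (tau p01 p11)) ++ B.map (tau p01 p11)
              ++ tau p01 p11 a :: (D.map (tau p01 p11) ++ List.replicate (k - e) p01) := by
          simp [nxt, List.append_assoc]
        have hshape2 : nxt p01 p11 k e (C.drop k ++ (a :: (B ++ D)))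
            = (List.replicate e p11 ++ (C.drop k).map (tau p01 p11))
              ++ tau p01 p11 a :: (B.map (tau p01 p11) ++ (D.map (tau p01 p11) ++ List.replicate (k - e) p01)) := by
          simp [nxt, List.append_assoc]
        have hmv := ihMV (List.replicate e p11 ++ (C.drop k).map (tau p01 p11))
          (B.map (tau p01 p11)) (D.map (tau p01 p11) ++ List.replicate (k - e) p01)
          (tau p01 p11 a) ?_ ?_ ?_
        · rw [hshape1, hshape2]
          have := mul_le_mul_of_nonneg_left hmv hc.hb0
          linarith [this]
        · refine (InR_append_iff p01 p11).2 ⟨(InR_append_iff p01 p11).2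
            ⟨(InR_append_iff p01 p11).2 ⟨InR_p11 p01 p11 β k m N hc _,
              InR_tauL p01 p11 β k m N hc hInE⟩, InR_tauL p01 p11 β k m N hc hInB⟩,
            (InR_cons_iff p01 p11).2 ⟨tau_mem p01 p11 hc.h00 hc.h11 hc.hp
              ⟨le_trans hc.h00 har.1, le_trans har.2 hc.h11⟩,
            (InR_append_iff p01 p11).2 ⟨InR_tauL p01 p11 β k m N hc hInD,
              InR_p01 p01 p11 β k m N hc _⟩⟩⟩
        · rw [e1] at hlen
          simp at hlen ⊢
          omega
        · intro b hb
          rw [List.mem_map] at hb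
          obtain ⟨z, hz, rfl⟩ := hb
          exact tau_mono p01 p11 hc.hp (haB z hz)
    calc bf (C.take k) _ ≤ _ := key
      _ = bf (C.take k) (fun e => rmin m e + β * Wl p01 p11 β k m s
            (nxt p01 p11 k e (C.drop k ++ (a :: (B ++ D))))) + β * Rbar p01 p11 m (k-1) := by
          rw [bf_add, bf_const]
      _ ≤ _ + Rbar p01 p11 m (k-1) := by
          have := Rbar_nn p01 p11 β k m N hc
          nlinarith [hc.hb1]
  · -- straddle
    have hj : k - 1 - C.length < B.length := by omega
    set j := k - 1 - C.length with hjdef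
    set M := C ++ B.take j with hMdef
    set b1 := B[j]'hj with hb1def
    set Bs := B.drop (k - C.length) with hBsdef
    have hM : M.length = k - 1 := by rw [hMdef]; simp [List.length_take]; omega
    have hdropB : B.drop j = b1 :: Bs := by
      rw [hb1def, hBsdef, List.drop_eq_getElem_cons hj, show j + 1 = k - C.length by omega]
    have hu : C ++ B ++ a :: D = M ++ b1 :: (Bs ++ a :: D) := by
      conv_lhs => rw [← List.take_append_drop j B]
      rw [hdropB, hMdef]
      simp [List.append_assoc]
    have hv0 : Wl p01 p11 β k m (s+1) (C ++ a :: (B ++ D))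
        = Wl p01 p11 β k m (s+1) (M ++ a :: (b1 :: (Bs ++ D))) := by
      rw [v_rewrite p01 p11 β k m (B := B) (C := C) (D := D) a hc.hk1 hCk hj (s+1)]
    rw [hu] at hIn hlen ⊢
    rw [hv0]
    -- range facts
    have hInM : InR p01 p11 M := ((InR_append_iff p01 p11).1 hIn).1
    have hrest := ((InR_append_iff p01 p11).1 hIn).2
    have hb1r : p01 ≤ b1 ∧ b1 ≤ p11 := ((InR_cons_iff p01 p11).1 hrest).1
    have hrest2 := ((InR_cons_iff p01 p11).1 hrest).2
    have hInBs : InR p01 p11 Bs := ((InR_append_iff p01 p11).1 hrest2).1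
    have haD := ((InR_append_iff p01 p11).1 hrest2).2
    have har : p01 ≤ a ∧ a ≤ p11 := ((InR_cons_iff p01 p11).1 haD).1
    have hInD : InR p01 p11 D := ((InR_cons_iff p01 p11).1 haD).2
    have hab1 : a ≤ b1 := haB b1 (by rw [hb1def]; exact List.getElem_mem hj)
    have haBs : ∀ b ∈ Bs, a ≤ b := fun b hb => haB b (List.drop_subset _ B hb)
    have hNlen : M.length + 1 + (Bs.length + 1 + D.length) = N := by simp at hlen; omega
    set τBs := Bs.map (tau p01 p11) with hτBs
    set τD := D.map (tau p01 p11) with hτD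
    have hInτBs : InR p01 p11 τBs := InR_tauL p01 p11 β k m N hc hInBs
    have hInτD : InR p01 p11 τD := InR_tauL p01 p11 β k m N hc hInD
    have hp01τBs : ∀ b ∈ τBs, p01 ≤ b := fun b hb => (hInτBs b hb).1
    have hτBsp11 : ∀ b ∈ τBs, b ≤ p11 := fun b hb => (hInτBs b hb).2
    have hp01τD : ∀ b ∈ τD, p01 ≤ b := fun b hb => (hInτD b hb).1
    have hτDp11 : ∀ b ∈ τD, b ≤ p11 := fun b hb => (hInτD b hb).2
    -- the four value families
    set Up : ℕ → ℝ := fun c => Wl p01 p11 β k m s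
      ((List.replicate c p11 ++ τBs) ++ p11 :: (τD ++ List.replicate (k - c) p01)) with hUp
    set Uq : ℕ → ℝ := fun c => Wl p01 p11 β k m s
      ((List.replicate c p11 ++ τBs) ++ p01 :: (τD ++ List.replicate (k - c) p01)) with hUq
    set Vp : ℕ → ℝ := fun c => Wl p01 p11 β k m s
      (List.replicate c p11 ++ p11 :: (τBs ++ (τD ++ List.replicate (k - c) p01))) with hVp
    set Vq : ℕ → ℝ := fun c => Wl p01 p11 β k m s
      (List.replicate c p11 ++ p01 :: (τBs ++ (τD ++ List.replicate (k - c) p01))) with hVq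
    have hpeelU : ∀ c : ℕ, Wl p01 p11 β k m s (nxt p01 p11 k c (Bs ++ a :: D))
        = a * Up c + (1 - a) * Uq c := by
      intro c
      have hnn : nxt p01 p11 k c (Bs ++ a :: D)
          = (List.replicate c p11 ++ τBs) ++ tau p01 p11 a :: (τD ++ List.replicate (k - c) p01) := by
        simp [nxt, hτBs, hτD, List.append_assoc]
      rw [hnn, Wl_tau_peel, hUp, hUq]
    have hpeelV : ∀ c : ℕ, Wl p01 p11 β k m s (nxt p01 p11 k c (b1 :: (Bs ++ D)))
        = b1 * Vp c + (1 - b1) * Vq c := by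
      intro c
      have hnn : nxt p01 p11 k c (b1 :: (Bs ++ D))
          = List.replicate c p11 ++ tau p01 p11 b1 :: (τBs ++ (τD ++ List.replicate (k - c) p01)) := by
        simp [nxt, hτBs, hτD, List.append_assoc]
      rw [hnn, Wl_tau_peel, hVp, hVq]
    have hu' : Wl p01 p11 β k m (s+1) (M ++ b1 :: (Bs ++ a :: D))
        = bf M (fun e =>
            b1 * (rmin m (e+1) + β * (a * Up (e+1) + (1-a) * Uq (e+1)))
            + (1-b1) * (rmin m e + β * (a * Up e + (1-a) * Uq e))) := by
      rw [Wl_expand p01 p11 β k m hc.hk1 s M b1 _ hM]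
      apply bf_congr'
      intro e _
      rw [hpeelU (e+1), hpeelU e]
    have hv' : Wl p01 p11 β k m (s+1) (M ++ a :: (b1 :: (Bs ++ D)))
        = bf M (fun e =>
            a * (rmin m (e+1) + β * (b1 * Vp (e+1) + (1-b1) * Vq (e+1)))
            + (1-a) * (rmin m e + β * (b1 * Vp e + (1-b1) * Vq e))) := by
      rw [Wl_expand p01 p11 β k m hc.hk1 s M a _ hM]
      apply bf_congr'
      intro e _
      rw [hpeelV (e+1), hpeelV e]
    rw [hu', hv']
    have hRb := Rbar_nn p01 p11 β k m N hc
    have hd := bf_dmin_bounds p01 p11 β k m N hc hM hInM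
    have ha0 : 0 ≤ a := le_trans hc.h00 har.1
    have ha1 : a ≤ 1 := le_trans har.2 hc.h11
    have hb10 : 0 ≤ b1 := le_trans hc.h00 hb1r.1
    have hb11 : b1 ≤ 1 := le_trans hb1r.2 hc.h11
    have hmono : bf M (fun e =>
            b1 * (rmin m (e+1) + β * (a * Up (e+1) + (1-a) * Uq (e+1)))
            + (1-b1) * (rmin m e + β * (a * Up e + (1-a) * Uq e)))
        ≤ bf M (fun e =>
            (a * (rmin m (e+1) + β * (b1 * Vp (e+1) + (1-b1) * Vq (e+1)))
            + (1-a) * (rmin m e + β * (b1 * Vp e + (1-b1) * Vq e)))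
            + ((b1 - a) * dmin m e + β * ((1 - b1) * Rbar p01 p11 m (k-1)))) := by
      apply bf_mono
      · exact InR01 p01 p11 hc.h00 hc.h11 hInM
      · intro e he
        have heK : e ≤ k - 1 := hM ▸ he
        -- (I) Up (e+1) ≤ Vp (e+1)
        have hI : Up (e+1) ≤ Vp (e+1) := by
          have := moveBigLeft p01 p11 β k m N hc ihSW τBs (List.replicate (e+1) p11)
            (τD ++ List.replicate (k - (e+1)) p01) p11 hτBsp11 ?_ ?_
          · simpa only [hUp, hVp] using this
          · refine (InR_append_iff p01 p11).2 ⟨InR_p11 p01 p11 β k m N hc _,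
              (InR_cons_iff p01 p11).2 ⟨⟨hc.hp, le_refl _⟩,
              (InR_append_iff p01 p11).2 ⟨hInτBs,
              (InR_append_iff p01 p11).2 ⟨hInτD, InR_p01 p01 p11 β k m N hc _⟩⟩⟩⟩
          · simp [hτBs, hτD]
            omega
        -- (II) Uq e ≤ Vq e + Rbar
        have hII : Uq e ≤ Vq e + Rbar p01 p11 m (k-1) := by
          have := ihMV (List.replicate e p11) τBs (τD ++ List.replicate (k - e) p01) p01
            ?_ ?_ hp01τBs
          · simpa only [hUq, hVq] using this
          · refine (InR_append_iff p01 p11).2 ⟨(InR_append_iff p01 p11).2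
              ⟨InR_p11 p01 p11 β k m N hc _, hInτBs⟩,
              (InR_cons_iff p01 p11).2 ⟨⟨le_refl _, hc.hp⟩,
              (InR_append_iff p01 p11).2 ⟨hInτD, InR_p01 p01 p11 β k m N hc _⟩⟩⟩
          · simp [hτBs, hτD]
            omega
        -- (III) Uq (e+1) ≤ Vp e
        have hVpe : Vp e = Wl p01 p11 β k m s
            (((List.replicate (e+1) p11 ++ τBs) ++ τD) ++ p01 :: List.replicate (k - (e+1)) p01) := by
          simp only [hVp]
          rw [repl_absorb, show k - e = (k - (e+1)) + 1 by omega]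
          simp [List.append_assoc, List.replicate_succ]
        have hIII : Uq (e+1) ≤ Vp e := by
          have := moveSmallRight p01 p11 β k m N hc ihSW τD
            (List.replicate (e+1) p11 ++ τBs) (List.replicate (k - (e+1)) p01) p01 hp01τD ?_ ?_
          · rw [hVpe]
            simpa only [hUq, List.append_assoc] using this
          · refine (InR_append_iff p01 p11).2 ⟨(InR_append_iff p01 p11).2
              ⟨InR_p11 p01 p11 β k m N hc _, hInτBs⟩,
              (InR_cons_iff p01 p11).2 ⟨⟨le_refl _, hc.hp⟩,
              (InR_append_iff p01 p11).2 ⟨hInτD, InR_p01 p01 p11 β k m N hc _⟩⟩⟩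
          · simp [hτBs, hτD]
            omega
        -- (IV) Up e ≤ Vq (e+1) + Rbar
        have hZ : Wl p01 p11 β k m s
            (List.replicate e p11 ++ p11 :: (τBs ++ (τD ++ List.replicate (k - e) p01)))
            = Wl p01 p11 β k m s
              ((List.replicate (e+1) p11 ++ (τBs ++ τD)) ++ p01 :: List.replicate (k - (e+1)) p01) := by
          rw [repl_absorb, show k - e = (k - (e+1)) + 1 by omega]
          simp [List.append_assoc, List.replicate_succ]
        have hIVa : Up e ≤ Wl p01 p11 β k m s
            (List.replicate e p11 ++ p11 :: (τBs ++ (τD ++ List.replicate (k - e) p01))) := by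
          have := moveBigLeft p01 p11 β k m N hc ihSW τBs (List.replicate e p11)
            (τD ++ List.replicate (k - e) p01) p11 hτBsp11 ?_ ?_
          · simpa only [hUp] using this
          · refine (InR_append_iff p01 p11).2 ⟨InR_p11 p01 p11 β k m N hc _,
              (InR_cons_iff p01 p11).2 ⟨⟨hc.hp, le_refl _⟩,
              (InR_append_iff p01 p11).2 ⟨hInτBs,
              (InR_append_iff p01 p11).2 ⟨hInτD, InR_p01 p01 p11 β k m N hc _⟩⟩⟩⟩
          · simp [hτBs, hτD]
            omega
        have hIVb : Wl p01 p11 β k m s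
            ((List.replicate (e+1) p11 ++ (τBs ++ τD)) ++ p01 :: List.replicate (k - (e+1)) p01)
            ≤ Vq (e+1) + Rbar p01 p11 m (k-1) := by
          have := ihMV (List.replicate (e+1) p11) (τBs ++ τD) (List.replicate (k - (e+1)) p01) p01
            ?_ ?_ ?_
          · have heq : Vq (e+1) = Wl p01 p11 β k m s
                (List.replicate (e+1) p11 ++ p01 :: ((τBs ++ τD) ++ List.replicate (k - (e+1)) p01)) := by
              simp only [hVq, List.append_assoc]
            rw [heq]
            exact this
          · refine (InR_append_iff p01 p11).2 ⟨(InR_append_iff p01 p11).2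
              ⟨InR_p11 p01 p11 β k m N hc _,
               (InR_append_iff p01 p11).2 ⟨hInτBs, hInτD⟩⟩,
              (InR_cons_iff p01 p11).2 ⟨⟨le_refl _, hc.hp⟩, InR_p01 p01 p11 β k m N hc _⟩⟩
          · simp [hτBs, hτD]
            omega
          · intro b hb
            rcases List.mem_append.1 hb with h | h
            exacts [hp01τBs b h, hp01τD b h]
        have hIV : Up e ≤ Vq (e+1) + Rbar p01 p11 m (k-1) := by
          rw [hZ] at hIVa
          linarith
        -- combine
        have s1 : (a * b1) * (Up (e+1) - Vp (e+1)) ≤ 0 :=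
          mul_nonpos_of_nonneg_of_nonpos (mul_nonneg ha0 hb10) (by linarith)
        have s2 : (b1 * (1 - a)) * (Uq (e+1) - Vp e) ≤ 0 :=
          mul_nonpos_of_nonneg_of_nonpos (mul_nonneg hb10 (by linarith)) (by linarith)
        have s3 : (a * (1 - b1)) * (Up e - Vq (e+1)) ≤ (a * (1 - b1)) * Rbar p01 p11 m (k-1) :=
          mul_le_mul_of_nonneg_left (by linarith) (mul_nonneg ha0 (by linarith))
        have s4 : ((1 - a) * (1 - b1)) * (Uq e - Vq e) ≤ ((1 - a) * (1 - b1)) * Rbar p01 p11 m (k-1) :=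
          mul_le_mul_of_nonneg_left (by linarith) (mul_nonneg (by linarith) (by linarith))
        have hX : (a * b1) * (Up (e+1) - Vp (e+1)) + (b1 * (1 - a)) * (Uq (e+1) - Vp e)
            + (a * (1 - b1)) * (Up e - Vq (e+1)) + ((1 - a) * (1 - b1)) * (Uq e - Vq e)
            ≤ (1 - b1) * Rbar p01 p11 m (k-1) := by nlinarith [s1, s2, s3, s4]
        have h5 : β * ((a * b1) * (Up (e+1) - Vp (e+1)) + (b1 * (1 - a)) * (Uq (e+1) - Vp e)
            + (a * (1 - b1)) * (Up e - Vq (e+1)) + ((1 - a) * (1 - b1)) * (Uq e - Vq e))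
            ≤ β * ((1 - b1) * Rbar p01 p11 m (k-1)) :=
          mul_le_mul_of_nonneg_left hX hc.hb0
        have key : (b1 * (rmin m (e+1) + β * (a * Up (e+1) + (1-a) * Uq (e+1)))
            + (1-b1) * (rmin m e + β * (a * Up e + (1-a) * Uq e)))
            - (a * (rmin m (e+1) + β * (b1 * Vp (e+1) + (1-b1) * Vq (e+1)))
            + (1-a) * (rmin m e + β * (b1 * Vp e + (1-b1) * Vq e)))
            = (b1 - a) * dmin m e
              + β * ((a * b1) * (Up (e+1) - Vp (e+1)) + (b1 * (1 - a)) * (Uq (e+1) - Vp e)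
                + (a * (1 - b1)) * (Up e - Vq (e+1)) + ((1 - a) * (1 - b1)) * (Uq e - Vq e)) := by
          simp only [dmin]
          ring
        linarith [key, h5]
    have hsplit : bf M (fun e =>
            (a * (rmin m (e+1) + β * (b1 * Vp (e+1) + (1-b1) * Vq (e+1)))
            + (1-a) * (rmin m e + β * (b1 * Vp e + (1-b1) * Vq e)))
            + ((b1 - a) * dmin m e + β * ((1 - b1) * Rbar p01 p11 m (k-1))))
        = bf M (fun e =>
            a * (rmin m (e+1) + β * (b1 * Vp (e+1) + (1-b1) * Vq (e+1)))
            + (1-a) * (rmin m e + β * (b1 * Vp e + (1-b1) * Vq e)))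
          + ((b1 - a) * bf M (dmin m) + β * ((1 - b1) * Rbar p01 p11 m (k-1))) := by
      rw [bf_add M (fun e =>
            a * (rmin m (e+1) + β * (b1 * Vp (e+1) + (1-b1) * Vq (e+1)))
            + (1-a) * (rmin m e + β * (b1 * Vp e + (1-b1) * Vq e)))
          (fun e => (b1 - a) * dmin m e + β * ((1 - b1) * Rbar p01 p11 m (k-1))),
          bf_add M (fun e => (b1 - a) * dmin m e)
            (fun _ => β * ((1 - b1) * Rbar p01 p11 m (k-1))),
          bf_smul M (b1 - a) (dmin m), bf_const M (β * ((1 - b1) * Rbar p01 p11 m (k-1)))]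
    rw [hsplit] at hmono
    have h6 : (b1 - a) * bf M (dmin m) ≤ (b1 - a) * Rbar p01 p11 m (k-1) :=
      mul_le_mul_of_nonneg_left hd.2.1 (by linarith)
    have h7 : β * ((1 - b1) * Rbar p01 p11 m (k-1)) ≤ (1 - b1) * Rbar p01 p11 m (k-1) := by
      have h70 : 0 ≤ (1 - b1) * Rbar p01 p11 m (k-1) :=
        mul_nonneg (by linarith) hRb
      have := mul_le_mul_of_nonneg_right hc.hb1 h70
      linarith [this]
    have h8 : (b1 - a) * Rbar p01 p11 m (k-1) + (1 - b1) * Rbar p01 p11 m (k-1)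
        ≤ Rbar p01 p11 m (k-1) := by
      have heq : (b1 - a) * Rbar p01 p11 m (k-1) + (1 - b1) * Rbar p01 p11 m (k-1)
          = Rbar p01 p11 m (k-1) - a * Rbar p01 p11 m (k-1) := by ring
      rw [heq]
      linarith [mul_nonneg ha0 hRb]
    linarith [hmono]
end L1

namespace L1
variable (p01 p11 β : ℝ) (k m N : ℕ)

theorem SW_and_MV (hc : Ctx p01 p11 β k m N) :
    ∀ s, SWp p01 p11 β k m N s ∧ MVp p01 p11 β k m N s := by
  intro s
  induction s with
  | zero => exact ⟨SW0 p01 p11 β k m N hc, MV0 p01 p11 β k m N hc⟩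
  | succ s ih => exact ⟨SWstep p01 p11 β k m N hc s ih.1 ih.2,
      MVstep p01 p11 β k m N hc s ih.1 ih.2⟩

end L1

end AUX

/-- key inequality L1 for positively correlated channels:
`ℛ̄ + W_t(ω_N, ω_1, …, ω_{N-1}) ≥ W_t(ω_1, …, ω_N)`. -/
theorem Wpos_L1 (p01 p11 β : ℝ) (h0 : p01 ∈ Set.Icc (0 : ℝ) 1)
    (h1 : p11 ∈ Set.Icc (0 : ℝ) 1) (hp : p01 ≤ p11)
    (N k m T : ℕ) (hm : 1 ≤ m) (hmk : m ≤ k) (hkN : k ≤ N) (hT : 1 ≤ T)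
    (hβ0 : 0 ≤ β) (hβ1 : β ≤ 1)
    (hcond : β * Rbar p01 p11 m (k - 1) ≤ Rlow p01 p11 m (k - 1)) :
    ∀ t, 1 ≤ t → t ≤ T → ∀ ω : Fin N → ℝ,
      (∀ i, ω i ∈ Set.Icc p01 p11) → Antitone ω →
      Rbar p01 p11 m (k - 1) + Wpos p01 p11 β N k m (T - t) (cycR ω) ≥
        Wpos p01 p11 β N k m (T - t) ω := by
  intro t _ _ ω hIcc hAnti
  have hk1 : 1 ≤ k := le_trans hm hmk
  have hN1 : 1 ≤ N := le_trans hk1 hkN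
  have hc : L1.Ctx p01 p11 β k m N :=
    ⟨h0.1, h1.2, hp, hβ0, hβ1, hk1, hkN, hcond⟩
  rw [ge_iff_le, L1.Wpos_eq_Wl p01 p11 β k m hkN (T - t) ω,
      L1.Wpos_eq_Wl p01 p11 β k m hkN (T - t) (cycR ω)]
  have h1eq : List.ofFn ω
      = ([] : List ℝ) ++ (List.ofFn (fun i : Fin (N-1) => ω (Fin.castLE (by omega) i)))
          ++ (ω ⟨N-1, by omega⟩) :: ([] : List ℝ) := by
    apply List.ext_getElem
    · simp
      omega
    · intro i hi1 hi2
      have hiN : i < N := by simpa using hi1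
      simp only [List.getElem_ofFn, List.nil_append]
      rcases lt_or_ge i (N-1) with hlt | hge
      · rw [List.getElem_append_left (by simpa using hlt)]
        simp only [List.getElem_ofFn]
        exact congrArg ω (Fin.ext rfl)
      · have hieq : i = N - 1 := by omega
        rw [List.getElem_append_right (by simpa using hge), List.getElem_singleton]
        exact congrArg ω (Fin.ext (by simpa using hieq))
  have h2eq : List.ofFn (cycR ω)
      = ([] : List ℝ) ++ (ω ⟨N-1, by omega⟩)
          :: ((List.ofFn (fun i : Fin (N-1) => ω (Fin.castLE (by omega) i))) ++ ([] : List ℝ)) := by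
    apply List.ext_getElem
    · simp
      omega
    · intro i hi1 hi2
      have hiN : i < N := by simpa using hi1
      simp only [List.getElem_ofFn, List.nil_append, List.append_nil]
      rcases Nat.eq_zero_or_pos i with rfl | hpos
      · rw [List.getElem_cons_zero]
        show cycR ω ⟨0, hiN⟩ = _
        simp [cycR]
      · obtain ⟨i', rfl⟩ : ∃ i', i = i' + 1 := ⟨i - 1, by omega⟩
        rw [List.getElem_cons_succ, List.getElem_ofFn]
        show cycR ω ⟨i' + 1, hiN⟩ = _
        simp only [cycR]
        rw [dif_neg (by simp)]
        exact congrArg ω (Fin.ext (by simp))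
  have hmv := (L1.SW_and_MV p01 p11 β k m N hc (T - t)).2 ([] : List ℝ)
    (List.ofFn (fun i : Fin (N-1) => ω (Fin.castLE (by omega) i))) ([] : List ℝ)
    (ω ⟨N-1, by omega⟩) ?_ ?_ ?_
  · rw [← h1eq, ← h2eq] at hmv
    linarith [hmv]
  · rw [← h1eq]
    intro z hz
    rw [List.mem_ofFn] at hz
    obtain ⟨i, rfl⟩ := hz
    exact ⟨(hIcc i).1, (hIcc i).2⟩
  · rw [← h1eq]
    simp
  · intro b hb
    rw [List.mem_ofFn] at hb
    obtain ⟨i, rfl⟩ := hb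
    apply hAnti
    show ((Fin.castLE _ i : Fin N) : ℕ) ≤ N - 1
    have := i.isLt
    simp [Fin.castLE]
end
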